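/- arXiv:2501.13476 — 5 statements merged into one kernel-verified Lean document; each statement's English description precedes it below -/
import Mathlib

section
/- Let Λ be a finite dimensional algebra over an algebraically closed field K, and let S be a finite semibrick in mod Λ. If a brick B ∈ S and an irreducible component Z ∈ Irr(Λ) satisfy that the closure of the orbit O_B is properly contained in Z, then there exists a brick B' such that S ⊔ {B'} is a semibrick and B' ∈ Z. -/
/-!
Common setup: representation schemes of a finite dimensional algebra `Λ = KQ/I`
(`Q` a finite quiver, `I` an admissible ideal), following the paper.
-/

namespace RepScheme

variable (K : Type) [Field K]
variable (Q0 Q1 : Type) [Fintype Q0] [Fintype Q1]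
variable (s t : Q1 → Q0)

/-- The Zariski topology on the affine space `σ → K`: generated by the complements of
hypersurfaces; its closed sets are exactly the common zero loci of sets of polynomials. -/
def zariskiTopology (σ : Type) : TopologicalSpace (σ → K) :=
  TopologicalSpace.generateFrom
    {U | ∃ p : MvPolynomial σ K, U = {x | MvPolynomial.eval x p ≠ 0}}

/-- The representation space `rep(Q,d)` of the quiver `Q` for the dimension vector `d`. -/
def Rep (d : Q0 → ℕ) : Type :=
  ∀ a : Q1, Matrix (Fin (d (t a))) (Fin (d (s a))) K

/-- `rep(Q,d)` carries the Zariski topology, transported from its affine coordinates. -/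
instance (d : Q0 → ℕ) : TopologicalSpace (Rep K Q0 Q1 s t d) :=
  TopologicalSpace.induced
    (fun M (x : Σ a : Q1, Fin (d (t a)) × Fin (d (s a))) => M x.1 x.2.1 x.2.2)
    (zariskiTopology K _)

/-- Paths in the quiver `Q`. -/
inductive QPath : Q0 → Q0 → Type where
  | nil (i : Q0) : QPath i i
  | cons {i j : Q0} (p : QPath i j) (a : Q1) (ha : s a = j) : QPath i (t a)

/-- The length of a path. -/
def QPath.length : ∀ {i j : Q0}, QPath Q0 Q1 s t i j → ℕ
  | _, _, .nil _ => 0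
  | _, _, .cons p _ _ => QPath.length p + 1

/-- Evaluation of a path in a point of `rep(Q,d)` (composition of the corresponding matrices). -/
def evalPath {d : Q0 → ℕ} (M : Rep K Q0 Q1 s t d) :
    ∀ {i j : Q0}, QPath Q0 Q1 s t i j → Matrix (Fin (d j)) (Fin (d i)) K
  | _, _, .nil _ => 1
  | _, _, .cons p a ha =>
      M a * (Matrix.reindex (finCongr (congrArg d ha)).symm (Equiv.refl _) (evalPath M p))

/-- Hom space `Hom_Λ(M, N)` between two representation points, as a `K`-subspace of the space
of tuples of matrices. -/
def RepHom {d c : Q0 → ℕ} (M : Rep K Q0 Q1 s t d) (N : Rep K Q0 Q1 s t c) :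
    Submodule K (∀ i : Q0, Matrix (Fin (c i)) (Fin (d i)) K) where
  carrier := {f | ∀ a : Q1, f (t a) * M a = N a * f (s a)}
  add_mem' := fun hf hg => by
    intro a
    simp only [Pi.add_apply, Matrix.add_mul, Matrix.mul_add]
    rw [hf a, hg a]
  zero_mem' := by intro a; simp
  smul_mem' := fun c f hf => by
    intro a
    simp only [Pi.smul_apply, Matrix.smul_mul, Matrix.mul_smul]
    rw [hf a]

/-- A representation point is a brick if its endomorphism ring is `K`,
i.e. one-dimensional over `K`. -/
def IsBrick {d : Q0 → ℕ} (M : Rep K Q0 Q1 s t d) : Prop :=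
  Module.finrank K (RepHom K Q0 Q1 s t M M) = 1

variable (rel : ∀ i j : Q0, Set (QPath Q0 Q1 s t i j →₀ K))

/-- A representation point satisfies the relations generating the admissible ideal `I`. -/
def SatisfiesRel {d : Q0 → ℕ} (M : Rep K Q0 Q1 s t d) : Prop :=
  ∀ (i j : Q0) (r : QPath Q0 Q1 s t i j →₀ K), r ∈ rel i j →
    ∑ p ∈ r.support, r p • evalPath K Q0 Q1 s t M p = 0

/-- The representation scheme `rep(Λ,d)` of `Λ = KQ/I` : the closed subscheme of `rep(Q,d)`
cut out by the relations generating `I`, with the (subspace) Zariski topology. -/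
def RepMod (d : Q0 → ℕ) : Type :=
  {M : Rep K Q0 Q1 s t d // SatisfiesRel K Q0 Q1 s t rel M}

instance (d : Q0 → ℕ) : TopologicalSpace (RepMod K Q0 Q1 s t rel d) :=
  inferInstanceAs (TopologicalSpace {M : Rep K Q0 Q1 s t d // SatisfiesRel K Q0 Q1 s t rel M})

/-- Admissibility of the ideal `I` generated by the chosen relations:
the relations lie in the square of the arrow ideal, and some power of the arrow ideal
is contained in `I` (an element of `KQ` lies in `I` iff it acts by zero on every
module satisfying the relations, i.e. on every point of every `rep(Λ,d)`). -/
structure IsAdmissible : Prop where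
  supported_in_radical_square :
    ∀ (i j : Q0), ∀ r ∈ rel i j, ∀ p ∈ r.support, 2 ≤ QPath.length Q0 Q1 s t p
  radical_nilpotent :
    ∃ n : ℕ, ∀ (d : Q0 → ℕ) (M : Rep K Q0 Q1 s t d), SatisfiesRel K Q0 Q1 s t rel M →
      ∀ (i j : Q0) (p : QPath Q0 Q1 s t i j), n ≤ QPath.length Q0 Q1 s t p →
        evalPath K Q0 Q1 s t M p = 0

/-- The orbit of a point of `rep(Λ,d)` under the action of `GL(d) = ∏ᵢ GL(dᵢ)`. -/
def orbit {d : Q0 → ℕ} (M : RepMod K Q0 Q1 s t rel d) : Set (RepMod K Q0 Q1 s t rel d) :=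
  {X | ∃ g : ∀ i : Q0, GL (Fin (d i)) K, ∀ a : Q1,
    X.1 a = (g (t a) : Matrix (Fin (d (t a))) (Fin (d (t a))) K) * M.1 a *
      (((g (s a))⁻¹ : GL (Fin (d (s a))) K) : Matrix (Fin (d (s a))) (Fin (d (s a))) K)}

/-- A finite dimensional `Λ`-module, regarded as a point of the representation scheme
`rep(Λ,d)` for its dimension vector `d`. -/
def ModPt : Type := Σ d : Q0 → ℕ, RepMod K Q0 Q1 s t rel d

/-- A set of modules (points of the representation schemes) is a semibrick if all its
elements are bricks and there are no nonzero homomorphisms between distinct elements. -/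
def IsSemibrick (S : Set (ModPt K Q0 Q1 s t rel)) : Prop :=
  (∀ B ∈ S, IsBrick K Q0 Q1 s t B.2.1) ∧
  ∀ B ∈ S, ∀ B' ∈ S, B ≠ B' → RepHom K Q0 Q1 s t B.2.1 B'.2.1 = ⊥

/-- `O` is an open subset of `Z` (in the subspace topology). -/
def IsOpenIn {X : Type} [TopologicalSpace X] (O Z : Set X) : Prop :=
  O ⊆ Z ∧ ∃ U : Set X, IsOpen U ∧ O = U ∩ Z

/-- `O` is an open dense subset of `Z` (in the subspace topology). -/
def IsOpenDenseIn {X : Type} [TopologicalSpace X] (O Z : Set X) : Prop :=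
  IsOpenIn O Z ∧ Z ⊆ closure O

/-- A brick is an open brick if its `GL(d)`-orbit is open dense in some irreducible
component of the representation scheme. -/
def IsOpenBrick (B : ModPt K Q0 Q1 s t rel) : Prop :=
  IsBrick K Q0 Q1 s t B.2.1 ∧
  ∃ Z ∈ irreducibleComponents (RepMod K Q0 Q1 s t rel B.1),
    IsOpenDenseIn (orbit K Q0 Q1 s t rel B.2) Z

/-- The set of modules lying in a given subset `Z` of `rep(Λ,δ)`. -/
def inComponent (δ : Q0 → ℕ) (Z : Set (RepMod K Q0 Q1 s t rel δ)) :
    Set (ModPt K Q0 Q1 s t rel) :=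
  {p | ∃ h : p.1 = δ, (h ▸ p.2) ∈ Z}

end RepScheme


open Matrix Module Submodule

section RankMinor

variable {K : Type} [Field K] {m n : Type} [Fintype m] [Fintype n]

/-- helper: rank ≥ k gives k independent columns. -/
theorem Matrix.exists_indep_cols_of_le_rank (A : Matrix m n K) {k : ℕ} (h : k ≤ A.rank) :
    ∃ c : Fin k → n, Function.Injective c ∧ LinearIndependent K (fun j => Aᵀ (c j)) := by
  classical
  obtain ⟨b, hbsub, hbspan, hbind⟩ := exists_linearIndependent K (Set.range Aᵀ)
  have hbfin : b.Finite := (Set.finite_range Aᵀ).subset hbsub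
  haveI : Fintype b := hbfin.fintype
  have hcard : k ≤ Fintype.card b := by
    have h1 : A.rank = finrank K (span K b) := by
      rw [Matrix.rank_eq_finrank_span_cols, show A.col = Aᵀ from rfl, ← hbspan]
    have h2 : finrank K (span K b) = Fintype.card b := by
      rw [finrank_span_set_eq_card hbind, Set.toFinset_card]
    omega
  obtain ⟨emb⟩ := Function.Embedding.nonempty_of_card_le (by simpa using hcard :
    Fintype.card (Fin k) ≤ Fintype.card b)
  -- choose preimages
  have hpre : ∀ x : b, ∃ j : n, Aᵀ j = (x : m → K) := fun x => hbsub x.2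
  choose pre hpre' using hpre
  refine ⟨fun i => pre (emb i), ?_, ?_⟩
  · intro i i' hii
    simp only at hii
    apply emb.injective
    apply Subtype.ext
    rw [← hpre' (emb i), ← hpre' (emb i'), hii]
  · have : (fun j : Fin k => Aᵀ (pre (emb j))) = (fun x : b => (x : m → K)) ∘ emb := by
      funext j; simp [hpre' (emb j)]
    rw [this]
    exact hbind.comp emb emb.injective

theorem Matrix.exists_minor_of_le_rank (A : Matrix m n K) {k : ℕ} (h : k ≤ A.rank) :
    ∃ (r : Fin k → m) (c : Fin k → n), (A.submatrix r c).det ≠ 0 := by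
  classical
  obtain ⟨c, hcinj, hcind⟩ := A.exists_indep_cols_of_le_rank h
  set B : Matrix m (Fin k) K := A.submatrix id c with hB
  have hrankB : B.rank = k := by
    have : Bᵀ = fun j => Aᵀ (c j) := by
      funext j i; rfl
    rw [Matrix.rank_eq_finrank_span_cols, show B.col = Bᵀ from rfl, this, finrank_span_eq_card hcind]
    simp
  have hrankBt : k ≤ Bᵀ.rank := by rw [Matrix.rank_transpose]; omega
  obtain ⟨r, hrinj, hrind⟩ := Bᵀ.exists_indep_cols_of_le_rank hrankBt
  refine ⟨r, c, ?_⟩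
  have hrows : LinearIndependent K (fun i => (A.submatrix r c) i) := by
    have : (fun i => (A.submatrix r c) i) = (fun i => Bᵀᵀ (r i)) := by
      funext i j; rfl
    rw [this]; exact hrind
  have := Matrix.linearIndependent_rows_iff_isUnit.mp hrows
  exact (Matrix.isUnit_iff_isUnit_det _).mp this |>.ne_zero

theorem Matrix.le_rank_of_minor (A : Matrix m n K) {k : ℕ} (r : Fin k → m) (c : Fin k → n)
    (h : (A.submatrix r c).det ≠ 0) : k ≤ A.rank := by
  classical
  have hunit : IsUnit (A.submatrix r c) := (Matrix.isUnit_iff_isUnit_det _).mpr (isUnit_iff_ne_zero.mpr h)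
  have hcols : LinearIndependent K (fun j => (A.submatrix r c)ᵀ j) :=
    Matrix.linearIndependent_cols_iff_isUnit.mpr hunit
  -- (A.submatrix r c)ᵀ j = (Aᵀ (c j)) ∘ r = funLeft r (Aᵀ (c j))
  have hcomp : (fun j => (A.submatrix r c)ᵀ j) =
      (LinearMap.funLeft K K r) ∘ (fun j => Aᵀ (c j)) := by
    funext j; ext i; rfl
  rw [hcomp] at hcols
  have hind : LinearIndependent K (fun j => Aᵀ (c j)) := hcols.of_comp _
  have h1 : finrank K (span K (Set.range (fun j => Aᵀ (c j)))) = k := by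
    rw [finrank_span_eq_card hind]; simp
  have h2 : span K (Set.range (fun j => Aᵀ (c j))) ≤ span K (Set.range Aᵀ) := by
    apply span_mono
    rintro x ⟨j, rfl⟩
    exact ⟨c j, rfl⟩
  have := Submodule.finrank_mono h2
  rw [Matrix.rank_eq_finrank_span_cols, show A.col = Aᵀ from rfl]
  omega

theorem Matrix.le_rank_iff_exists_minor (A : Matrix m n K) {k : ℕ} :
    k ≤ A.rank ↔ ∃ (r : Fin k → m) (c : Fin k → n), (A.submatrix r c).det ≠ 0 :=
  ⟨A.exists_minor_of_le_rank, fun ⟨r, c, h⟩ => A.le_rank_of_minor r c h⟩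

end RankMinor

namespace RepScheme

open Module Submodule Matrix MvPolynomial

section Aux

variable (K : Type) [Field K]
variable (Q0 Q1 : Type) [Fintype Q0] [Fintype Q1]
variable (s t : Q1 → Q0)

instance (d : Q0 → ℕ) : AddCommGroup (Rep K Q0 Q1 s t d) :=
  inferInstanceAs (AddCommGroup (∀ a : Q1, Matrix (Fin (d (t a))) (Fin (d (s a))) K))

instance (d : Q0 → ℕ) : Module K (Rep K Q0 Q1 s t d) :=
  inferInstanceAs (Module K (∀ a : Q1, Matrix (Fin (d (t a))) (Fin (d (s a))) K))

/-- coordinate index of `Rep d`. -/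
abbrev Coord (d : Q0 → ℕ) : Type := Σ a : Q1, Fin (d (t a)) × Fin (d (s a))

/-- coordinates of `Rep d`, as a linear equivalence. -/
def coordsLin (d : Q0 → ℕ) : Rep K Q0 Q1 s t d ≃ₗ[K] (Coord Q0 Q1 s t d → K) where
  toFun M := fun x => M x.1 x.2.1 x.2.2
  invFun g := fun a => Matrix.of fun p q => g ⟨a, (p, q)⟩
  map_add' M N := rfl
  map_smul' r M := rfl
  left_inv M := rfl
  right_inv g := rfl

/-- nonvanishing loci of polynomials are open in `Rep d`. -/
lemma isOpen_ne_zero (d : Q0 → ℕ) (p : MvPolynomial (Coord Q0 Q1 s t d) K) :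
    IsOpen {M : Rep K Q0 Q1 s t d | MvPolynomial.eval (coordsLin K Q0 Q1 s t d M) p ≠ 0} := by
  have : {M : Rep K Q0 Q1 s t d | MvPolynomial.eval (coordsLin K Q0 Q1 s t d M) p ≠ 0} =
      (fun (M : Rep K Q0 Q1 s t d) (x : Coord Q0 Q1 s t d) => M x.1 x.2.1 x.2.2) ⁻¹'
        {x | MvPolynomial.eval x p ≠ 0} := rfl
  rw [this]
  exact isOpen_induced (t := zariskiTopology K _)
    (TopologicalSpace.isOpen_generateFrom_of_mem ⟨p, rfl⟩)

variable (u v : Q0 → ℕ)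

/-- the space in which `RepHom M N` lives, for `M : Rep u`, `N : Rep v`. -/
abbrev HomSpace : Type := ∀ i : Q0, Matrix (Fin (v i)) (Fin (u i)) K

/-- the target space of the defining linear map of `RepHom`. -/
abbrev TargetSpace : Type := ∀ a : Q1, Matrix (Fin (v (t a))) (Fin (u (s a))) K

/-- left part (bilinear in `M` and `f`). -/
def homLinL : Rep K Q0 Q1 s t u →ₗ[K] (HomSpace K Q0 u v →ₗ[K] TargetSpace K Q0 Q1 s t u v) where
  toFun M :=
    { toFun := fun f => fun a => f (t a) * M a
      map_add' := fun f g => by funext a; simp [Matrix.add_mul]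
      map_smul' := fun r f => by funext a; simp [Matrix.smul_mul] }
  map_add' M N := by
    refine LinearMap.ext fun f => funext fun a => ?_
    show f (t a) * (M a + N a) = f (t a) * M a + f (t a) * N a
    rw [Matrix.mul_add]
  map_smul' r M := by
    refine LinearMap.ext fun f => funext fun a => ?_
    show f (t a) * (r • M a) = r • (f (t a) * M a)
    rw [Matrix.mul_smul]

/-- right part (bilinear in `N` and `f`). -/
def homLinR : Rep K Q0 Q1 s t v →ₗ[K] (HomSpace K Q0 u v →ₗ[K] TargetSpace K Q0 Q1 s t u v) where
  toFun N :=
    { toFun := fun f => fun a => N a * f (s a)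
      map_add' := fun f g => by funext a; simp [Matrix.mul_add]
      map_smul' := fun r f => by funext a; simp [Matrix.mul_smul] }
  map_add' M N := by
    refine LinearMap.ext fun f => funext fun a => ?_
    show (M a + N a) * f (s a) = M a * f (s a) + N a * f (s a)
    rw [Matrix.add_mul]
  map_smul' r M := by
    refine LinearMap.ext fun f => funext fun a => ?_
    show (r • M a) * f (s a) = r • (M a * f (s a))
    rw [Matrix.smul_mul]

lemma repHom_eq_ker (M : Rep K Q0 Q1 s t u) (N : Rep K Q0 Q1 s t v) :
    RepHom K Q0 Q1 s t M N =
      LinearMap.ker (homLinL K Q0 Q1 s t u v M - homLinR K Q0 Q1 s t u v N) := by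
  ext f
  constructor
  · intro hf
    have : ∀ a, f (t a) * M a = N a * f (s a) := hf
    simp only [LinearMap.mem_ker, LinearMap.sub_apply]
    funext a
    simp [homLinL, homLinR, this a]
  · intro hf
    intro a
    have := congrFun hf a
    simp only [LinearMap.sub_apply, homLinL, homLinR, LinearMap.coe_mk, AddHom.coe_mk,
      Pi.sub_apply, Pi.zero_apply] at this
    exact sub_eq_zero.mp this

end Aux

end RepScheme

namespace RepScheme

open Module Submodule Matrix MvPolynomial

section Fam

variable (K : Type) [Field K]
variable (Q0 Q1 : Type) [Fintype Q0] [Fintype Q1] [DecidableEq Q0] [DecidableEq Q1]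
variable (s t : Q1 → Q0)
variable (u v : Q0 → ℕ)

/-- index of the standard basis of `HomSpace`. -/
abbrev HIdx : Type := Σ i : Q0, Fin (v i) × Fin (u i)

/-- index of the standard basis of `TargetSpace`. -/
abbrev TIdx : Type := Σ a : Q1, Fin (v (t a)) × Fin (u (s a))

/-- standard basis of `HomSpace`. -/
noncomputable def bH : Basis (HIdx Q0 u v) K (HomSpace K Q0 u v) :=
  Pi.basis (fun i => Matrix.stdBasis K (Fin (v i)) (Fin (u i)))

/-- standard basis of `TargetSpace`. -/
noncomputable def bT : Basis (TIdx Q0 Q1 s t u v) K (TargetSpace K Q0 Q1 s t u v) :=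
  Pi.basis (fun a => Matrix.stdBasis K (Fin (v (t a))) (Fin (u (s a))))

variable (d : Q0 → ℕ)
variable (Ψ : Rep K Q0 Q1 s t d →ₗ[K] (HomSpace K Q0 u v →ₗ[K] TargetSpace K Q0 Q1 s t u v))
variable (C₀ : HomSpace K Q0 u v →ₗ[K] TargetSpace K Q0 Q1 s t u v)

/-- the matrix of the affine family `X ↦ Ψ X + C₀` at a point. -/
noncomputable def famMat (Xr : Rep K Q0 Q1 s t d) : Matrix (TIdx Q0 Q1 s t u v) (HIdx Q0 u v) K :=
  LinearMap.toMatrix (bH K Q0 u v) (bT K Q0 Q1 s t u v) (Ψ Xr + C₀)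

/-- the polynomial-entry matrix of the affine family `X ↦ Ψ X + C₀`. -/
noncomputable def famPoly : Matrix (TIdx Q0 Q1 s t u v) (HIdx Q0 u v)
    (MvPolynomial (Coord Q0 Q1 s t d) K) :=
  Matrix.of fun kk jj =>
    (∑ cc : Coord Q0 Q1 s t d,
      MvPolynomial.C (LinearMap.toMatrix (bH K Q0 u v) (bT K Q0 Q1 s t u v)
        (Ψ ((coordsLin K Q0 Q1 s t d).symm (fun x => if cc = x then 1 else 0))) kk jj) *
        MvPolynomial.X cc) +
    MvPolynomial.C (LinearMap.toMatrix (bH K Q0 u v) (bT K Q0 Q1 s t u v) C₀ kk jj)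

lemma famPoly_eval (Xr : Rep K Q0 Q1 s t d) (kk : TIdx Q0 Q1 s t u v) (jj : HIdx Q0 u v) :
    MvPolynomial.eval (coordsLin K Q0 Q1 s t d Xr) (famPoly K Q0 Q1 s t u v d Ψ C₀ kk jj) =
      famMat K Q0 Q1 s t u v d Ψ C₀ Xr kk jj := by
  classical
  have hXr : Xr = ∑ cc : Coord Q0 Q1 s t d, (coordsLin K Q0 Q1 s t d Xr cc) •
      (coordsLin K Q0 Q1 s t d).symm (fun x => if cc = x then 1 else 0) := by
    have h0 := pi_eq_sum_univ (coordsLin K Q0 Q1 s t d Xr)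
    have h1 := congrArg (coordsLin K Q0 Q1 s t d).symm h0
    rw [(coordsLin K Q0 Q1 s t d).symm_apply_apply, map_sum] at h1
    simpa only [_root_.map_smul] using h1
  have hmain : famMat K Q0 Q1 s t u v d Ψ C₀ Xr kk jj =
      (∑ cc : Coord Q0 Q1 s t d, (coordsLin K Q0 Q1 s t d Xr cc) *
        (LinearMap.toMatrix (bH K Q0 u v) (bT K Q0 Q1 s t u v)
          (Ψ ((coordsLin K Q0 Q1 s t d).symm (fun x => if cc = x then 1 else 0))) kk jj)) +
      LinearMap.toMatrix (bH K Q0 u v) (bT K Q0 Q1 s t u v) C₀ kk jj := by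
    rw [famMat, map_add, Matrix.add_apply]
    congr 1
    conv_lhs => rw [hXr, map_sum, map_sum]
    rw [Matrix.sum_apply]
    refine Finset.sum_congr rfl fun cc _ => ?_
    simp only [_root_.map_smul, Matrix.smul_apply, smul_eq_mul]
  rw [hmain, famPoly]
  simp only [Matrix.of_apply, _root_.map_add, map_sum, _root_.map_mul, eval_C, eval_X]
  congr 1
  exact Finset.sum_congr rfl fun cc _ => mul_comm _ _

lemma famPoly_det_eval {k : ℕ} (r : Fin k → TIdx Q0 Q1 s t u v) (c : Fin k → HIdx Q0 u v)
    (Xr : Rep K Q0 Q1 s t d) :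
    MvPolynomial.eval (coordsLin K Q0 Q1 s t d Xr)
        (((famPoly K Q0 Q1 s t u v d Ψ C₀).submatrix r c).det) =
      ((famMat K Q0 Q1 s t u v d Ψ C₀ Xr).submatrix r c).det := by
  rw [RingHom.map_det]
  congr 1
  ext kk jj
  simp only [RingHom.mapMatrix_apply, Matrix.map_apply, Matrix.submatrix_apply]
  exact famPoly_eval K Q0 Q1 s t u v d Ψ C₀ Xr _ _

/-- semicontinuity: the locus where the kernel of the affine family has dimension `≤ n`
is open in `Rep d`. -/
lemma isOpen_ker_le (n : ℕ) :
    IsOpen {Xr : Rep K Q0 Q1 s t d | finrank K (LinearMap.ker (Ψ Xr + C₀)) ≤ n} := by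
  classical
  set k₀ := Fintype.card (HIdx Q0 u v) - n with hk₀
  have key : ∀ Xr : Rep K Q0 Q1 s t d,
      finrank K (LinearMap.ker (Ψ Xr + C₀)) ≤ n ↔
      ∃ (r : Fin k₀ → TIdx Q0 Q1 s t u v) (c : Fin k₀ → HIdx Q0 u v),
        ((famMat K Q0 Q1 s t u v d Ψ C₀ Xr).submatrix r c).det ≠ 0 := by
    intro Xr
    rw [← Matrix.le_rank_iff_exists_minor]
    have hrank : (famMat K Q0 Q1 s t u v d Ψ C₀ Xr).rank =
        finrank K (LinearMap.range (Ψ Xr + C₀)) := by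
      rw [famMat, Matrix.rank_eq_finrank_range_toLin _ (bT K Q0 Q1 s t u v) (bH K Q0 u v),
        Matrix.toLin_toMatrix]
    have hrn := LinearMap.finrank_range_add_finrank_ker (Ψ Xr + C₀)
    have hdim : finrank K (HomSpace K Q0 u v) = Fintype.card (HIdx Q0 u v) :=
      finrank_eq_card_basis (bH K Q0 u v)
    have hle : (famMat K Q0 Q1 s t u v d Ψ C₀ Xr).rank ≤ Fintype.card (HIdx Q0 u v) := by
      rw [hrank]
      have := Submodule.finrank_le (LinearMap.range (Ψ Xr + C₀))
      omega
    rw [hdim] at hrn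
    rw [hrank]
    omega
  have hset : {Xr : Rep K Q0 Q1 s t d | finrank K (LinearMap.ker (Ψ Xr + C₀)) ≤ n} =
      ⋃ (r : Fin k₀ → TIdx Q0 Q1 s t u v), ⋃ (c : Fin k₀ → HIdx Q0 u v),
        {Xr : Rep K Q0 Q1 s t d | MvPolynomial.eval (coordsLin K Q0 Q1 s t d Xr)
          (((famPoly K Q0 Q1 s t u v d Ψ C₀).submatrix r c).det) ≠ 0} := by
    ext Xr
    simp only [Set.mem_setOf_eq, Set.mem_iUnion, key]
    simp only [famPoly_det_eval K Q0 Q1 s t u v d Ψ C₀]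
  rw [hset]
  exact isOpen_iUnion fun r => isOpen_iUnion fun c =>
    isOpen_ne_zero K Q0 Q1 s t d _

end Fam

end RepScheme

namespace RepScheme

open Module Submodule Matrix MvPolynomial

section FamRank

variable (K : Type) [Field K]
variable (Q0 Q1 : Type) [Fintype Q0] [Fintype Q1] [DecidableEq Q0] [DecidableEq Q1]
variable (s t : Q1 → Q0) (u v : Q0 → ℕ) (d : Q0 → ℕ)
variable (Ψ : Rep K Q0 Q1 s t d →ₗ[K] (HomSpace K Q0 u v →ₗ[K] TargetSpace K Q0 Q1 s t u v))
variable (C₀ : HomSpace K Q0 u v →ₗ[K] TargetSpace K Q0 Q1 s t u v)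

lemma famMat_rank (Xr : Rep K Q0 Q1 s t d) :
    (famMat K Q0 Q1 s t u v d Ψ C₀ Xr).rank =
      finrank K (LinearMap.range (Ψ Xr + C₀)) := by
  rw [famMat, Matrix.rank_eq_finrank_range_toLin _ (bT K Q0 Q1 s t u v) (bH K Q0 u v),
    Matrix.toLin_toMatrix]

end FamRank

end RepScheme

section Cofactor

variable {K : Type} [Field K]

/-- Cramer-type identity: the vector of signed maximal minors of an `m' × (m'+1)` matrix is
in the kernel (as a column) of the matrix. -/
lemma cofactor_sum_eq_zero {m' : ℕ} (A' : Matrix (Fin m') (Fin (m' + 1)) K) (ρ : Fin m') :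
    ∑ j : Fin (m' + 1), ((-1 : K) ^ (j : ℕ) * (A'.submatrix id j.succAbove).det) * A' ρ j = 0 := by
  classical
  have hdup : (Matrix.of (Fin.cons (A' ρ) A') :
      Matrix (Fin (m' + 1)) (Fin (m' + 1)) K).det = 0 := by
    apply Matrix.det_zero_of_row_eq (i := 0) (j := ρ.succ) (Fin.succ_ne_zero ρ).symm
    funext q
    rfl
  rw [Matrix.det_succ_row_zero] at hdup
  have heq : ∀ j : Fin (m' + 1),
      (-1 : K) ^ (j : ℕ) * (Matrix.of (Fin.cons (A' ρ) A') : Matrix _ _ K) 0 j *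
        (((Matrix.of (Fin.cons (A' ρ) A') : Matrix _ _ K)).submatrix Fin.succ j.succAbove).det =
      ((-1 : K) ^ (j : ℕ) * (A'.submatrix id j.succAbove).det) * A' ρ j := by
    intro j
    have h1 : (Matrix.of (Fin.cons (A' ρ) A') : Matrix _ _ K) 0 j = A' ρ j := by
      rfl
    have h2 : ((Matrix.of (Fin.cons (A' ρ) A') : Matrix _ _ K)).submatrix Fin.succ j.succAbove =
        A'.submatrix id j.succAbove := by
      ext p q
      rfl
    rw [h1, h2]
    ring
  rw [Finset.sum_congr rfl (fun j _ => heq j)] at hdup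
  exact hdup

end Cofactor

namespace RepScheme

open Module Submodule Matrix MvPolynomial

section GenericOrbit

variable (K : Type) [Field K]
variable (Q0 Q1 : Type) [Fintype Q0] [Fintype Q1] [DecidableEq Q0] [DecidableEq Q1]
variable (s t : Q1 → Q0)
variable (rel : ∀ i j : Q0, Set (QPath Q0 Q1 s t i j →₀ K))
variable (d : Q0 → ℕ)

/-- **Key geometric lemma.** If an affine family `X ↦ Ψ X + C₀` of linear maps on the
endomorphism-shaped space has: one-dimensional kernel containing the identity at the point `B`,
nontrivial kernel at every point of an irreducible set `Z ∋ B`, and if kernel elements with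
invertible blocks certify membership in the orbit of `B`, then `Z` is contained in the closure
of the orbit of `B`. -/
lemma generic_orbit
    (Ψ : Rep K Q0 Q1 s t d →ₗ[K] (HomSpace K Q0 d d →ₗ[K] TargetSpace K Q0 Q1 s t d d))
    (C₀ : HomSpace K Q0 d d →ₗ[K] TargetSpace K Q0 Q1 s t d d)
    (Z : Set (RepMod K Q0 Q1 s t rel d)) (hZirr : IsIrreducible Z)
    (Bm : RepMod K Q0 Q1 s t rel d) (hBZ : Bm ∈ Z)
    (hker1 : finrank K (LinearMap.ker (Ψ Bm.1 + C₀)) = 1)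
    (hid : (1 : HomSpace K Q0 d d) ∈ LinearMap.ker (Ψ Bm.1 + C₀))
    (hidne : (1 : HomSpace K Q0 d d) ≠ 0)
    (hallker : ∀ X ∈ Z, LinearMap.ker (Ψ X.1 + C₀) ≠ ⊥)
    (horb : ∀ X : RepMod K Q0 Q1 s t rel d, ∀ f : HomSpace K Q0 d d,
        f ∈ LinearMap.ker (Ψ X.1 + C₀) → (∀ i, IsUnit ((f i).det)) →
        X ∈ orbit K Q0 Q1 s t rel Bm) :
    Z ⊆ closure (orbit K Q0 Q1 s t rel Bm) := by
  classical
  set m1 := Fintype.card (HIdx Q0 d d) with hm1def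
  have hdimV : finrank K (HomSpace K Q0 d d) = m1 := finrank_eq_card_basis (bH K Q0 d d)
  haveI hVnontriv : Nontrivial (HomSpace K Q0 d d) := ⟨1, 0, hidne⟩
  have hm1pos : 1 ≤ m1 := by
    rw [← hdimV]
    exact Module.finrank_pos
  obtain ⟨m', hm'⟩ : ∃ m', m' + 1 = m1 := ⟨m1 - 1, by omega⟩
  set FM := famMat K Q0 Q1 s t d d d Ψ C₀ with hFMdef
  set FP := famPoly K Q0 Q1 s t d d d Ψ C₀ with hFPdef
  -- rank of the family at B
  have hrnB := LinearMap.finrank_range_add_finrank_ker (Ψ Bm.1 + C₀)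
  rw [hdimV] at hrnB
  have hrankB : (FM Bm.1).rank = m' := by
    rw [hFMdef, famMat_rank]
    omega
  obtain ⟨r, c, hminB⟩ := (FM Bm.1).exists_minor_of_le_rank (k := m') (le_of_eq hrankB.symm)
  have hcinj : Function.Injective c := by
    intro j1 j2 h12
    by_contra hne
    exact hminB (Matrix.det_zero_of_column_eq hne fun k => by
      simp only [Matrix.submatrix_apply, h12])
  -- extend c to an injection g on Fin (m' + 1)
  obtain ⟨x₀, hx₀⟩ : ∃ x₀ : HIdx Q0 d d, x₀ ∉ Set.range c := by
    by_contra h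
    push_neg at h
    have hsurj : Function.Surjective c := fun x => h x
    have := Fintype.card_le_of_surjective c hsurj
    simp only [Fintype.card_fin] at this
    omega
  set g : Fin (m' + 1) → HIdx Q0 d d := Fin.snoc c x₀ with hgdef
  have hgcast : ∀ j : Fin m', g j.castSucc = c j := fun j => Fin.snoc_castSucc _ _ _
  have hglast : g (Fin.last m') = x₀ := Fin.snoc_last _ _
  have hginj : Function.Injective g := by
    intro j1 j2 h
    rcases Fin.eq_castSucc_or_eq_last j1 with ⟨i1, rfl⟩ | rfl <;>
      rcases Fin.eq_castSucc_or_eq_last j2 with ⟨i2, rfl⟩ | rfl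
    · rw [hgcast, hgcast] at h
      rw [hcinj h]
    · rw [hgcast, hglast] at h
      exact absurd ⟨i1, h⟩ hx₀
    · rw [hgcast, hglast] at h
      exact absurd ⟨i2, h.symm⟩ hx₀
    · rfl
  -- signed-minor polynomials and their values
  set wp : Fin (m' + 1) → MvPolynomial (Coord Q0 Q1 s t d) K :=
    fun j => (-1 : MvPolynomial (Coord Q0 Q1 s t d) K) ^ (j : ℕ) *
      ((FP.submatrix r (g ∘ j.succAbove)).det) with hwpdef
  set zf : Rep K Q0 Q1 s t d → Fin (m' + 1) → K :=
    fun X j => (-1 : K) ^ (j : ℕ) * (((FM X).submatrix r (g ∘ j.succAbove)).det) with hzfdef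
  have hzeval : ∀ (X : Rep K Q0 Q1 s t d) (j : Fin (m' + 1)),
      MvPolynomial.eval (coordsLin K Q0 Q1 s t d X) (wp j) = zf X j := by
    intro X j
    simp only [hwpdef, hzfdef, _root_.map_mul, map_pow, map_neg, _root_.map_one]
    rw [famPoly_det_eval]
  -- the polynomial kernel vector
  set uvec : Rep K Q0 Q1 s t d → HomSpace K Q0 d d :=
    fun X => ∑ j : Fin (m' + 1), zf X j • (bH K Q0 d d) (g j) with huvecdef
  -- row identity on the chosen rows
  have hrow : ∀ (X : Rep K Q0 Q1 s t d) (ρ : Fin m'),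
      (bT K Q0 Q1 s t d d).repr ((Ψ X + C₀) (uvec X)) (r ρ) = 0 := by
    intro X ρ
    have hexp : (bT K Q0 Q1 s t d d).repr ((Ψ X + C₀) (uvec X)) (r ρ) =
        ∑ j : Fin (m' + 1), zf X j * FM X (r ρ) (g j) := by
      rw [huvecdef]
      simp only [map_sum, _root_.map_smul, Finsupp.coe_finset_sum, Finset.sum_apply,
        Finsupp.smul_apply, smul_eq_mul]
      refine Finset.sum_congr rfl fun j _ => ?_
      rw [hFMdef, famMat, LinearMap.toMatrix_apply]
    rw [hexp]
    have hcof := cofactor_sum_eq_zero ((FM X).submatrix r g) ρ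
    rw [← hcof]
    refine Finset.sum_congr rfl fun j _ => ?_
    rw [Matrix.submatrix_submatrix]
    simp only [Matrix.submatrix_apply, Function.comp_id, hzfdef]
  -- pointwise: on the good locus the kernel vector is a nonzero kernel element
  have hpoint : ∀ X : Rep K Q0 Q1 s t d, ((FM X).submatrix r c).det ≠ 0 →
      LinearMap.ker (Ψ X + C₀) ≠ ⊥ →
      uvec X ∈ LinearMap.ker (Ψ X + C₀) ∧ uvec X ≠ 0 := by
    intro X hmin hk
    set L' : HomSpace K Q0 d d →ₗ[K] (Fin m' → K) :=
      { toFun := fun f => fun ρ => (bT K Q0 Q1 s t d d).repr ((Ψ X + C₀) f) (r ρ)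
        map_add' := fun f1 f2 => by
          funext ρ
          simp only [map_add, Finsupp.add_apply, Pi.add_apply]
        map_smul' := fun a f1 => by
          funext ρ
          simp only [_root_.map_smul, Finsupp.smul_apply, smul_eq_mul, RingHom.id_apply,
            Pi.smul_apply] } with hL'def
    have huL' : uvec X ∈ LinearMap.ker L' := by
      rw [LinearMap.mem_ker]
      funext ρ
      exact hrow X ρ
    have hkerle : LinearMap.ker (Ψ X + C₀) ≤ LinearMap.ker L' := by
      intro f hf
      rw [LinearMap.mem_ker] at hf ⊢
      funext ρ
      simp only [hL'def, LinearMap.coe_mk, AddHom.coe_mk, hf, map_zero, Finsupp.coe_zero,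
        Pi.zero_apply]
    have htm : LinearMap.toMatrix (bH K Q0 d d) (Pi.basisFun K (Fin m')) L' =
        (FM X).submatrix r id := by
      ext ρ jj
      rw [LinearMap.toMatrix_apply, Pi.basisFun_repr]
      simp only [hL'def, LinearMap.coe_mk, AddHom.coe_mk, Matrix.submatrix_apply, id_eq,
        hFMdef, famMat, LinearMap.toMatrix_apply]
    have hrk : ((FM X).submatrix r id).rank = m' := by
      refine le_antisymm ?_ ?_
      · exact (Matrix.rank_le_card_height _).trans (by simp)
      · refine Matrix.le_rank_of_minor _ id c ?_
        rw [Matrix.submatrix_submatrix]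
        simpa using hmin
    have hrangeL' : finrank K (LinearMap.range L') = m' := by
      have h := Matrix.rank_eq_finrank_range_toLin ((FM X).submatrix r id)
        (Pi.basisFun K (Fin m')) (bH K Q0 d d)
      rw [← htm, Matrix.toLin_toMatrix] at h
      rw [← h, htm, hrk]
    have hkerL' : finrank K (LinearMap.ker L') = 1 := by
      have h := LinearMap.finrank_range_add_finrank_ker L'
      rw [hdimV, hrangeL'] at h
      omega
    -- uvec X ≠ 0
    have hclast : g ∘ (Fin.last m').succAbove = c := by
      funext j
      simp only [Function.comp_apply, Fin.succAbove_last, hgcast]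
    have hulast : (bH K Q0 d d).repr (uvec X) (g (Fin.last m')) = zf X (Fin.last m') := by
      rw [huvecdef]
      simp only [map_sum, _root_.map_smul, Finsupp.coe_finset_sum, Finset.sum_apply,
        Finsupp.smul_apply, smul_eq_mul, Basis.repr_self, Finsupp.single_apply]
      rw [Finset.sum_eq_single (Fin.last m')]
      · simp
      · intro j _ hj
        rw [if_neg (fun hgj => hj (hginj hgj)), mul_zero]
      · intro h
        exact absurd (Finset.mem_univ _) h
    have hzlast : zf X (Fin.last m') ≠ 0 := by
      rw [hzfdef]
      simp only [hclast]
      exact mul_ne_zero (pow_ne_zero _ (neg_ne_zero.mpr one_ne_zero)) hmin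
    have hune : uvec X ≠ 0 := by
      intro h0
      apply hzlast
      rw [← hulast, h0, map_zero]
      rfl
    obtain ⟨w, hw, hwne⟩ := (LinearMap.ker (Ψ X + C₀)).ne_bot_iff.mp hk
    have hspan : (K ∙ w) = LinearMap.ker L' := by
      apply Submodule.eq_of_le_of_finrank_eq
      · rw [Submodule.span_singleton_le_iff_mem]
        exact hkerle hw
      · rw [finrank_span_singleton hwne, hkerL']
    have humem : uvec X ∈ (K ∙ w) := by
      rw [hspan]
      exact huL'
    obtain ⟨α, hα⟩ := Submodule.mem_span_singleton.mp humem
    have hαne : α ≠ 0 := by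
      rintro rfl
      rw [zero_smul] at hα
      exact hune hα.symm
    constructor
    · rw [← hα]
      exact Submodule.smul_mem _ α hw
    · exact hune
  -- at B: the kernel vector is a nonzero multiple of the identity
  have hkerBne : LinearMap.ker (Ψ Bm.1 + C₀) ≠ ⊥ := by
    intro h
    rw [h] at hker1
    simp [finrank_bot] at hker1
  obtain ⟨huB, huBne⟩ := hpoint Bm.1 hminB hkerBne
  have hspanB : (K ∙ (1 : HomSpace K Q0 d d)) = LinearMap.ker (Ψ Bm.1 + C₀) := by
    apply Submodule.eq_of_le_of_finrank_eq
    · rw [Submodule.span_singleton_le_iff_mem]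
      exact hid
    · rw [finrank_span_singleton hidne, hker1]
  obtain ⟨lam, hlam⟩ := Submodule.mem_span_singleton.mp (by rw [hspanB]; exact huB :
    uvec Bm.1 ∈ (K ∙ (1 : HomSpace K Q0 d d)))
  have hlamne : lam ≠ 0 := by
    rintro rfl
    rw [zero_smul] at hlam
    exact huBne hlam.symm
  -- block polynomials
  set blockP : ∀ i : Q0, Matrix (Fin (d i)) (Fin (d i)) (MvPolynomial (Coord Q0 Q1 s t d) K) :=
    fun i => Matrix.of fun p q =>
      ∑ j : Fin (m' + 1), MvPolynomial.C ((bH K Q0 d d) (g j) i p q) * wp j with hblockPdef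
  have hblockeval : ∀ (X : Rep K Q0 Q1 s t d) (i : Q0),
      (blockP i).map (MvPolynomial.eval (coordsLin K Q0 Q1 s t d X)) = (uvec X) i := by
    intro X i
    ext p q
    simp only [Matrix.map_apply, hblockPdef, Matrix.of_apply, map_sum, _root_.map_mul, eval_C,
      hzeval]
    rw [huvecdef]
    simp only [Finset.sum_apply, Pi.smul_apply, Matrix.sum_apply, Matrix.smul_apply,
      smul_eq_mul]
    exact Finset.sum_congr rfl fun j _ => mul_comm _ _
  have hdetblock : ∀ (X : Rep K Q0 Q1 s t d) (i : Q0),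
      MvPolynomial.eval (coordsLin K Q0 Q1 s t d X) ((blockP i).det) = ((uvec X) i).det := by
    intro X i
    rw [RingHom.map_det]
    congr 1
    rw [← hblockeval X i]
    rfl
  -- the good open set
  set O : Set (Rep K Q0 Q1 s t d) :=
    {M | MvPolynomial.eval (coordsLin K Q0 Q1 s t d M) ((FP.submatrix r c).det) ≠ 0} ∩
      ⋂ i : Q0, {M | MvPolynomial.eval (coordsLin K Q0 Q1 s t d M) ((blockP i).det) ≠ 0}
      with hOdef
  have hOopen : IsOpen O :=
    (isOpen_ne_zero K Q0 Q1 s t d _).inter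
      (isOpen_iInter_of_finite fun i => isOpen_ne_zero K Q0 Q1 s t d _)
  set OS : Set (RepMod K Q0 Q1 s t rel d) := Subtype.val ⁻¹' O with hOSdef
  have hOSopen : IsOpen OS := hOopen.preimage continuous_subtype_val
  have hBOS : Bm ∈ OS := by
    constructor
    · show MvPolynomial.eval (coordsLin K Q0 Q1 s t d Bm.1) ((FP.submatrix r c).det) ≠ 0
      rw [hFPdef, famPoly_det_eval]
      exact hminB
    · refine Set.mem_iInter.mpr fun i => ?_
      show MvPolynomial.eval (coordsLin K Q0 Q1 s t d Bm.1) ((blockP i).det) ≠ 0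
      rw [hdetblock]
      have : (uvec Bm.1) i = lam • (1 : Matrix (Fin (d i)) (Fin (d i)) K) := by
        rw [← hlam]
        rfl
      rw [this, Matrix.det_smul, Matrix.det_one, mul_one]
      exact pow_ne_zero _ hlamne
  have hOSorbit : ∀ X : RepMod K Q0 Q1 s t rel d, X ∈ OS → X ∈ Z →
      X ∈ orbit K Q0 Q1 s t rel Bm := by
    intro X hXOS hXZ
    obtain ⟨hXmin, hXblocks⟩ := hXOS
    have h1 : ((FM X.1).submatrix r c).det ≠ 0 := by
      have h2 : MvPolynomial.eval (coordsLin K Q0 Q1 s t d X.1) ((FP.submatrix r c).det) ≠ 0 :=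
        hXmin
      rwa [hFPdef, famPoly_det_eval] at h2
    obtain ⟨hmem, _⟩ := hpoint X.1 h1 (hallker X hXZ)
    refine horb X (uvec X.1) hmem fun i => ?_
    have hXi := Set.mem_iInter.mp hXblocks i
    rw [isUnit_iff_ne_zero]
    intro h0
    apply hXi
    show MvPolynomial.eval (coordsLin K Q0 Q1 s t d X.1) ((blockP i).det) = 0
    rw [hdetblock, h0]
  -- conclude by irreducibility
  intro z hz
  rw [_root_.mem_closure_iff]
  intro o ho hzo
  obtain ⟨y, hyZ, hyo, hyOS⟩ := hZirr.2 o OS ho hOSopen ⟨z, hz, hzo⟩ ⟨Bm, hBZ, hBOS⟩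
  exact ⟨y, hyo, hOSorbit y hyOS hyZ⟩

end GenericOrbit

end RepScheme

namespace RepScheme

open Module Submodule Matrix MvPolynomial

section Assembly

variable (K : Type) [Field K]
variable (Q0 Q1 : Type) [Fintype Q0] [Fintype Q1] [DecidableEq Q0] [DecidableEq Q1]
variable (s t : Q1 → Q0)
variable (rel : ∀ i j : Q0, Set (QPath Q0 Q1 s t i j →₀ K))
variable (d : Q0 → ℕ)

lemma one_mem_repHom (M : Rep K Q0 Q1 s t d) :
    (1 : HomSpace K Q0 d d) ∈ RepHom K Q0 Q1 s t M M := by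
  intro a
  show (1 : Matrix _ _ K) * M a = M a * (1 : Matrix _ _ K)
  rw [Matrix.one_mul, Matrix.mul_one]

lemma self_mem_orbit (Bm : RepMod K Q0 Q1 s t rel d) :
    Bm ∈ orbit K Q0 Q1 s t rel Bm := by
  refine ⟨fun i => 1, fun a => ?_⟩
  simp

lemma mem_orbit_of_hom (Bm X : RepMod K Q0 Q1 s t rel d) (f : HomSpace K Q0 d d)
    (hf : f ∈ RepHom K Q0 Q1 s t Bm.1 X.1) (hinv : ∀ i, IsUnit ((f i).det)) :
    X ∈ orbit K Q0 Q1 s t rel Bm := by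
  have hu : ∀ i, IsUnit (f i) := fun i => (Matrix.isUnit_iff_isUnit_det _).mpr (hinv i)
  refine ⟨fun i => (hu i).unit, fun a => ?_⟩
  have hfa : f (t a) * Bm.1 a = X.1 a * f (s a) := hf a
  have h1 : ∀ i, ((hu i).unit : Matrix (Fin (d i)) (Fin (d i)) K) = f i := fun i =>
    (hu i).unit_spec
  simp only [h1]
  rw [hfa, Matrix.mul_assoc]
  rw [(hu (s a)).mul_val_inv, Matrix.mul_one]

lemma mem_orbit_of_hom' (Bm X : RepMod K Q0 Q1 s t rel d) (f : HomSpace K Q0 d d)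
    (hf : f ∈ RepHom K Q0 Q1 s t X.1 Bm.1) (hinv : ∀ i, IsUnit ((f i).det)) :
    X ∈ orbit K Q0 Q1 s t rel Bm := by
  have hu : ∀ i, IsUnit (f i) := fun i => (Matrix.isUnit_iff_isUnit_det _).mpr (hinv i)
  refine ⟨fun i => (hu i).unit⁻¹, fun a => ?_⟩
  have hfa : f (t a) * X.1 a = Bm.1 a * f (s a) := hf a
  have h1 : ∀ i, ((hu i).unit : Matrix (Fin (d i)) (Fin (d i)) K) = f i := fun i =>
    (hu i).unit_spec
  simp only [inv_inv, h1]
  rw [Matrix.mul_assoc, ← hfa, ← Matrix.mul_assoc]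
  rw [(hu (t a)).val_inv_mul, Matrix.one_mul]

/-- singletons are closed in `RepMod`. -/
lemma isClosed_singleton_repMod (y : RepMod K Q0 Q1 s t rel d) :
    IsClosed ({y} : Set (RepMod K Q0 Q1 s t rel d)) := by
  rw [← isOpen_compl_iff]
  have hset : ({y}ᶜ : Set (RepMod K Q0 Q1 s t rel d)) =
      Subtype.val ⁻¹' (⋃ x : Coord Q0 Q1 s t d,
        {M : Rep K Q0 Q1 s t d | MvPolynomial.eval (coordsLin K Q0 Q1 s t d M)
          (MvPolynomial.X x - MvPolynomial.C (coordsLin K Q0 Q1 s t d y.1 x)) ≠ 0}) := by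
    ext X
    simp only [Set.mem_compl_iff, Set.mem_singleton_iff, Set.mem_preimage, Set.mem_iUnion,
      Set.mem_setOf_eq, map_sub, eval_X, eval_C, sub_ne_zero]
    constructor
    · intro hne
      by_contra h
      replace h : ¬ ∃ x : Coord Q0 Q1 s t d, coordsLin K Q0 Q1 s t d X.1 x ≠ coordsLin K Q0 Q1 s t d y.1 x :=
        fun ⟨x, hx⟩ => h (Set.mem_iUnion.mpr ⟨x, hx⟩)
      push_neg at h
      apply hne
      apply Subtype.ext
      apply (coordsLin K Q0 Q1 s t d).injective
      funext x
      exact h x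
    · rintro ⟨x, hx⟩ rfl
      obtain ⟨⟨x', rfl⟩, hx'⟩ := hx
      exact absurd rfl hx'
  rw [hset]
  exact (isOpen_iUnion fun x => isOpen_ne_zero K Q0 Q1 s t d _).preimage continuous_subtype_val

/-- finite sets are closed in `RepMod`. -/
lemma isClosed_finite_repMod {F : Set (RepMod K Q0 Q1 s t rel d)} (hF : F.Finite) :
    IsClosed F := by
  have : F = ⋃ y ∈ F, {y} := by simp
  rw [this]
  exact Set.Finite.isClosed_biUnion hF fun y _ => isClosed_singleton_repMod K Q0 Q1 s t rel d y

end Assembly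

end RepScheme

/-- **Theorem (extension theorem of semibricks, Thm 1.2).** Let `Λ = KQ/I` be a finite
dimensional algebra over an algebraically closed field `K` and `S` a finite semibrick.
If `B ∈ S` and an irreducible component `Z ∈ Irr(Λ)` satisfy that the orbit closure of `B`
is properly contained in `Z`, then there is a brick `B' ∈ Z` with `S ⊔ {B'}` a semibrick. -/
theorem RepScheme.semibrick_extension
    (K : Type) [Field K] [IsAlgClosed K]
    (Q0 Q1 : Type) [Fintype Q0] [Fintype Q1] (s t : Q1 → Q0)
    (rel : ∀ i j : Q0, Set (QPath Q0 Q1 s t i j →₀ K))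
    (hadm : IsAdmissible K Q0 Q1 s t rel)
    (S : Set (ModPt K Q0 Q1 s t rel))
    (hsb : IsSemibrick K Q0 Q1 s t rel S)
    (hfin : S.Finite)
    (B : ModPt K Q0 Q1 s t rel) (hB : B ∈ S)
    (Z : Set (RepMod K Q0 Q1 s t rel B.1))
    (hZ : Z ∈ irreducibleComponents (RepMod K Q0 Q1 s t rel B.1))
    (hss : closure (orbit K Q0 Q1 s t rel B.2) ⊂ Z) :
    ∃ B' : RepMod K Q0 Q1 s t rel B.1, B' ∈ Z ∧
      (⟨B.1, B'⟩ : ModPt K Q0 Q1 s t rel) ∉ S ∧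
      IsSemibrick K Q0 Q1 s t rel (insert ⟨B.1, B'⟩ S) := by
  classical
  open Module Submodule Matrix MvPolynomial RepScheme in
  obtain ⟨d, Bm⟩ := B
  have hZirr : IsIrreducible Z := hZ.1
  have hBm_orb : Bm ∈ orbit K Q0 Q1 s t rel Bm := self_mem_orbit K Q0 Q1 s t rel d Bm
  have hBZ : Bm ∈ Z := hss.1 (subset_closure hBm_orb)
  have hbrick : Module.finrank K (RepHom K Q0 Q1 s t Bm.1 Bm.1) = 1 := hsb.1 ⟨d, Bm⟩ hB
  -- identity family is nonzero
  have hdne : (1 : HomSpace K Q0 d d) ≠ 0 := by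
    intro h10
    haveI : Subsingleton (HomSpace K Q0 d d) := subsingleton_of_zero_eq_one h10.symm
    have hz : RepHom K Q0 Q1 s t Bm.1 Bm.1 = ⊥ := Subsingleton.elim _ _
    rw [hz, finrank_bot] at hbrick
    omega
  -- kernel descriptions of the hom spaces, as affine families
  have hkerTo : ∀ (c : Q0 → ℕ) (N : Rep K Q0 Q1 s t c) (X : Rep K Q0 Q1 s t d),
      LinearMap.ker ((homLinL K Q0 Q1 s t d c) X + (-(homLinR K Q0 Q1 s t d c N))) =
        RepHom K Q0 Q1 s t X N := by
    intro c N X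
    rw [repHom_eq_ker K Q0 Q1 s t d c X N, ← sub_eq_add_neg]
  have hkerFrom : ∀ (c : Q0 → ℕ) (N : Rep K Q0 Q1 s t c) (X : Rep K Q0 Q1 s t d),
      LinearMap.ker ((-(homLinR K Q0 Q1 s t c d)) X + (homLinL K Q0 Q1 s t c d) N) =
        RepHom K Q0 Q1 s t N X := by
    intro c N X
    rw [repHom_eq_ker K Q0 Q1 s t c d N X, LinearMap.neg_apply, neg_add_eq_sub]
  have hkerEnd : ∀ X : Rep K Q0 Q1 s t d,
      LinearMap.ker ((homLinL K Q0 Q1 s t d d - homLinR K Q0 Q1 s t d d) X + 0) =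
        RepHom K Q0 Q1 s t X X := by
    intro X
    rw [repHom_eq_ker K Q0 Q1 s t d d X X, add_zero, LinearMap.sub_apply]
  -- the two hard nonemptiness statements
  have hVfrom : ∃ X ∈ Z, RepHom K Q0 Q1 s t Bm.1 X.1 = ⊥ := by
    by_contra hcon
    push_neg at hcon
    have hsub : Z ⊆ closure (orbit K Q0 Q1 s t rel Bm) := by
      refine generic_orbit K Q0 Q1 s t rel d (-(homLinR K Q0 Q1 s t d d))
        ((homLinL K Q0 Q1 s t d d) Bm.1) Z hZirr Bm hBZ ?_ ?_ hdne ?_ ?_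
      · rw [hkerFrom d Bm.1 Bm.1]
        exact hbrick
      · rw [hkerFrom d Bm.1 Bm.1]
        exact one_mem_repHom K Q0 Q1 s t d Bm.1
      · intro X hX
        rw [hkerFrom d Bm.1 X.1]
        exact hcon X hX
      · intro X f hf hdet
        rw [hkerFrom d Bm.1 X.1] at hf
        exact mem_orbit_of_hom K Q0 Q1 s t rel d Bm X f hf hdet
    exact hss.2 hsub
  have hVto : ∃ X ∈ Z, RepHom K Q0 Q1 s t X.1 Bm.1 = ⊥ := by
    by_contra hcon
    push_neg at hcon
    have hsub : Z ⊆ closure (orbit K Q0 Q1 s t rel Bm) := by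
      refine generic_orbit K Q0 Q1 s t rel d (homLinL K Q0 Q1 s t d d)
        (-((homLinR K Q0 Q1 s t d d) Bm.1)) Z hZirr Bm hBZ ?_ ?_ hdne ?_ ?_
      · rw [hkerTo d Bm.1 Bm.1]
        exact hbrick
      · rw [hkerTo d Bm.1 Bm.1]
        exact one_mem_repHom K Q0 Q1 s t d Bm.1
      · intro X hX
        rw [hkerTo d Bm.1 X.1]
        exact hcon X hX
      · intro X f hf hdet
        rw [hkerTo d Bm.1 X.1] at hf
        exact mem_orbit_of_hom' K Q0 Q1 s t rel d Bm X f hf hdet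
    exact hss.2 hsub
  -- open sets
  set Ofrom : Set (RepMod K Q0 Q1 s t rel d) := Subtype.val ⁻¹'
    {M : Rep K Q0 Q1 s t d | Module.finrank K
      (LinearMap.ker ((-(homLinR K Q0 Q1 s t d d)) M + (homLinL K Q0 Q1 s t d d) Bm.1)) ≤ 0}
    with hOfromdef
  have hOfromOpen : IsOpen Ofrom :=
    (isOpen_ker_le K Q0 Q1 s t d d d _ _ 0).preimage continuous_subtype_val
  set Oto : Set (RepMod K Q0 Q1 s t rel d) := Subtype.val ⁻¹'
    {M : Rep K Q0 Q1 s t d | Module.finrank K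
      (LinearMap.ker ((homLinL K Q0 Q1 s t d d) M + (-((homLinR K Q0 Q1 s t d d) Bm.1)))) ≤ 0}
    with hOtodef
  have hOtoOpen : IsOpen Oto :=
    (isOpen_ker_le K Q0 Q1 s t d d d _ _ 0).preimage continuous_subtype_val
  set Oend : Set (RepMod K Q0 Q1 s t rel d) := Subtype.val ⁻¹'
    {M : Rep K Q0 Q1 s t d | Module.finrank K
      (LinearMap.ker ((homLinL K Q0 Q1 s t d d - homLinR K Q0 Q1 s t d d) M + 0)) ≤ 1}
    with hOenddef
  have hOendOpen : IsOpen Oend :=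
    (isOpen_ker_le K Q0 Q1 s t d d d _ _ 1).preimage continuous_subtype_val
  set OtoS : ModPt K Q0 Q1 s t rel → Set (RepMod K Q0 Q1 s t rel d) := fun y =>
    Subtype.val ⁻¹' {M : Rep K Q0 Q1 s t d | Module.finrank K
      (LinearMap.ker ((homLinL K Q0 Q1 s t d y.1) M +
        (-((homLinR K Q0 Q1 s t d y.1) y.2.1)))) ≤ 0} with hOtoSdef
  have hOtoSOpen : ∀ y, IsOpen (OtoS y) := fun y =>
    (isOpen_ker_le K Q0 Q1 s t d y.1 d _ _ 0).preimage continuous_subtype_val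
  set OfromS : ModPt K Q0 Q1 s t rel → Set (RepMod K Q0 Q1 s t rel d) := fun y =>
    Subtype.val ⁻¹' {M : Rep K Q0 Q1 s t d | Module.finrank K
      (LinearMap.ker ((-(homLinR K Q0 Q1 s t y.1 d)) M +
        (homLinL K Q0 Q1 s t y.1 d) y.2.1)) ≤ 0} with hOfromSdef
  have hOfromSOpen : ∀ y, IsOpen (OfromS y) := fun y =>
    (isOpen_ker_le K Q0 Q1 s t y.1 d d _ _ 0).preimage continuous_subtype_val
  -- the big "tame" open set
  set W : Set (RepMod K Q0 Q1 s t rel d) :=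
    Oend ∩ ⋂ y ∈ S \ {(⟨d, Bm⟩ : ModPt K Q0 Q1 s t rel)}, (OtoS y ∩ OfromS y) with hWdef
  have hWopen : IsOpen W := by
    refine hOendOpen.inter ?_
    exact Set.Finite.isOpen_biInter (hfin.diff) fun y _ => (hOtoSOpen y).inter (hOfromSOpen y)
  have hBmW : Bm ∈ W := by
    constructor
    · show Module.finrank K (LinearMap.ker
        ((homLinL K Q0 Q1 s t d d - homLinR K Q0 Q1 s t d d) Bm.1 + 0)) ≤ 1
      rw [hkerEnd Bm.1, hbrick]
    · refine Set.mem_biInter fun y hy => ?_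
      obtain ⟨hyS, hyne⟩ := hy
      have hne : (⟨d, Bm⟩ : ModPt K Q0 Q1 s t rel) ≠ y := fun h =>
        hyne (Set.mem_singleton_iff.mpr h.symm)
      constructor
      · show Module.finrank K (LinearMap.ker ((homLinL K Q0 Q1 s t d y.1) Bm.1 +
          (-((homLinR K Q0 Q1 s t d y.1) y.2.1)))) ≤ 0
        rw [hkerTo y.1 y.2.1 Bm.1, hsb.2 ⟨d, Bm⟩ hB y hyS hne, finrank_bot]
      · show Module.finrank K (LinearMap.ker ((-(homLinR K Q0 Q1 s t y.1 d)) Bm.1 +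
          (homLinL K Q0 Q1 s t y.1 d) y.2.1)) ≤ 0
        rw [hkerFrom y.1 y.2.1 Bm.1, hsb.2 y hyS ⟨d, Bm⟩ hB hne.symm, finrank_bot]
  -- the finite set of points of S with dimension vector d
  set F : Set (RepMod K Q0 Q1 s t rel d) :=
    (fun X => (⟨d, X⟩ : ModPt K Q0 Q1 s t rel)) ⁻¹' S with hFdef
  have hFfin : F.Finite := Set.Finite.preimage (fun X _ Y _ h => eq_of_heq
    ((Sigma.mk.inj_iff.mp h).2)) hfin
  have hZnotF : ¬(Z ⊆ F) := by
    intro hZF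
    obtain ⟨z2, hz2Z, hz2nc⟩ := Set.exists_of_ssubset hss
    have hz2ne : z2 ≠ Bm := fun h => hz2nc (by rw [h]; exact subset_closure hBm_orb)
    have hU : IsOpen (F \ {Bm})ᶜ :=
      (isClosed_finite_repMod K Q0 Q1 s t rel d (hFfin.diff)).isOpen_compl
    have hV : IsOpen ({Bm} : Set (RepMod K Q0 Q1 s t rel d))ᶜ :=
      (isClosed_singleton_repMod K Q0 Q1 s t rel d Bm).isOpen_compl
    obtain ⟨y, hyZ, hyU, hyV⟩ := hZirr.2 _ _ hU hV ⟨Bm, hBZ, fun hc => hc.2 rfl⟩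
      ⟨z2, hz2Z, hz2ne⟩
    exact hyU ⟨hZF hyZ, hyV⟩
  -- nonempty intersections with Z
  have hZW : (Z ∩ W).Nonempty := ⟨Bm, hBZ, hBmW⟩
  have hZOfrom : (Z ∩ Ofrom).Nonempty := by
    obtain ⟨X, hXZ, hX0⟩ := hVfrom
    refine ⟨X, hXZ, ?_⟩
    show Module.finrank K (LinearMap.ker ((-(homLinR K Q0 Q1 s t d d)) X.1 +
      (homLinL K Q0 Q1 s t d d) Bm.1)) ≤ 0
    rw [hkerFrom d Bm.1 X.1, hX0, finrank_bot]
  have hZOto : (Z ∩ Oto).Nonempty := by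
    obtain ⟨X, hXZ, hX0⟩ := hVto
    refine ⟨X, hXZ, ?_⟩
    show Module.finrank K (LinearMap.ker ((homLinL K Q0 Q1 s t d d) X.1 +
      (-((homLinR K Q0 Q1 s t d d) Bm.1)))) ≤ 0
    rw [hkerTo d Bm.1 X.1, hX0, finrank_bot]
  have hZFc : (Z ∩ Fᶜ).Nonempty := by
    obtain ⟨x, hxZ, hxF⟩ := Set.not_subset.mp hZnotF
    exact ⟨x, hxZ, hxF⟩
  have hN1 := hZirr.2 W Ofrom hWopen hOfromOpen hZW hZOfrom
  have hN2 := hZirr.2 (W ∩ Ofrom) Oto (hWopen.inter hOfromOpen) hOtoOpen hN1 hZOto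
  have hN3 := hZirr.2 ((W ∩ Ofrom) ∩ Oto) Fᶜ ((hWopen.inter hOfromOpen).inter hOtoOpen)
    (isClosed_finite_repMod K Q0 Q1 s t rel d hFfin).isOpen_compl hN2 hZFc
  obtain ⟨y, hyZ, ⟨⟨hyW, hyFrom⟩, hyTo⟩, hyFc⟩ := hN3
  -- extract the hom-vanishing properties of y
  have hy_toB : RepHom K Q0 Q1 s t y.1 Bm.1 = ⊥ := by
    have h1 : Module.finrank K (LinearMap.ker ((homLinL K Q0 Q1 s t d d) y.1 +
      (-((homLinR K Q0 Q1 s t d d) Bm.1)))) ≤ 0 := hyTo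
    rw [hkerTo d Bm.1 y.1] at h1
    exact Submodule.finrank_eq_zero.mp (Nat.le_zero.mp h1)
  have hy_fromB : RepHom K Q0 Q1 s t Bm.1 y.1 = ⊥ := by
    have h1 : Module.finrank K (LinearMap.ker ((-(homLinR K Q0 Q1 s t d d)) y.1 +
      (homLinL K Q0 Q1 s t d d) Bm.1)) ≤ 0 := hyFrom
    rw [hkerFrom d Bm.1 y.1] at h1
    exact Submodule.finrank_eq_zero.mp (Nat.le_zero.mp h1)
  have hy_toS : ∀ w ∈ S, w ≠ (⟨d, Bm⟩ : ModPt K Q0 Q1 s t rel) →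
      RepHom K Q0 Q1 s t y.1 w.2.1 = ⊥ := by
    intro w hwS hwne
    have h1 := (Set.mem_iInter₂.mp hyW.2 w ⟨hwS, hwne⟩).1
    have h2 : Module.finrank K (LinearMap.ker ((homLinL K Q0 Q1 s t d w.1) y.1 +
      (-((homLinR K Q0 Q1 s t d w.1) w.2.1)))) ≤ 0 := h1
    rw [hkerTo w.1 w.2.1 y.1] at h2
    exact Submodule.finrank_eq_zero.mp (Nat.le_zero.mp h2)
  have hy_fromS : ∀ w ∈ S, w ≠ (⟨d, Bm⟩ : ModPt K Q0 Q1 s t rel) →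
      RepHom K Q0 Q1 s t w.2.1 y.1 = ⊥ := by
    intro w hwS hwne
    have h1 := (Set.mem_iInter₂.mp hyW.2 w ⟨hwS, hwne⟩).2
    have h2 : Module.finrank K (LinearMap.ker ((-(homLinR K Q0 Q1 s t w.1 d)) y.1 +
      (homLinL K Q0 Q1 s t w.1 d) w.2.1)) ≤ 0 := h1
    rw [hkerFrom w.1 w.2.1 y.1] at h2
    exact Submodule.finrank_eq_zero.mp (Nat.le_zero.mp h2)
  have hy_brick : Module.finrank K (RepHom K Q0 Q1 s t y.1 y.1) = 1 := by
    have hle : Module.finrank K (RepHom K Q0 Q1 s t y.1 y.1) ≤ 1 := by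
      have h1 : Module.finrank K (LinearMap.ker
          ((homLinL K Q0 Q1 s t d d - homLinR K Q0 Q1 s t d d) y.1 + 0)) ≤ 1 := hyW.1
      rwa [hkerEnd y.1] at h1
    have hge : 1 ≤ Module.finrank K (RepHom K Q0 Q1 s t y.1 y.1) := by
      haveI : Nontrivial (RepHom K Q0 Q1 s t y.1 y.1) :=
        ⟨⟨⟨1, one_mem_repHom K Q0 Q1 s t d y.1⟩, 0, fun hEq =>
          hdne (congrArg Subtype.val hEq)⟩⟩
      exact Module.finrank_pos
    omega
  -- the new point is not in S
  have hynotS : (⟨d, y⟩ : ModPt K Q0 Q1 s t rel) ∉ S := hyFc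
  refine ⟨y, hyZ, hynotS, ?_, ?_⟩
  · -- all elements of the extended set are bricks
    intro C hC
    rcases Set.mem_insert_iff.mp hC with rfl | hCS
    · exact hy_brick
    · exact hsb.1 C hCS
  · -- hom-vanishing between distinct elements
    intro x hx w hw hxw
    rcases Set.mem_insert_iff.mp hx with rfl | hxS
    · rcases Set.mem_insert_iff.mp hw with rfl | hwS
      · exact absurd rfl hxw
      · by_cases hwB : w = (⟨d, Bm⟩ : ModPt K Q0 Q1 s t rel)
        · rw [hwB]
          exact hy_toB
        · exact hy_toS w hwS hwB
    · rcases Set.mem_insert_iff.mp hw with rfl | hwS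
      · by_cases hxB : x = (⟨d, Bm⟩ : ModPt K Q0 Q1 s t rel)
        · rw [hxB]
          exact hy_fromB
        · exact hy_fromS x hxS hxB
      · exact hsb.2 x hxS w hwS hxw
end

section
/- Let Λ = KQ be the path algebra of a finite acyclic quiver Q over an algebraically closed field K, and let S be a finite semibrick. Assume a brick B ∈ S is not exceptional (i.e., Ext^1_Λ(B,B) ≠ 0). Then there exists a brick B' such that S ⊔ {B'} is a semibrick and the dimension vector of B' is a positive integer multiple of the dimension vector of B. -/
/-!
Common setup: representation schemes of a finite dimensional algebra `Λ = KQ/I`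
(`Q` a finite quiver, `I` an admissible ideal), following the paper.
-/

namespace RepScheme

variable (K : Type) [Field K]
variable (Q0 Q1 : Type) [Fintype Q0] [Fintype Q1]
variable (s t : Q1 → Q0)

/-! ### Path algebras `Λ = KQ` of finite acyclic quivers -/

/-- The quiver `Q` is acyclic: every cycle is trivial. -/
def IsAcyclic : Prop :=
  ∀ (i : Q0) (p : QPath Q0 Q1 s t i i), p = QPath.nil i

/-- A finite dimensional module over the path algebra `Λ = KQ`, regarded as a point of
`rep(Q,d)` for its dimension vector `d`. -/
def ModPtP : Type := Σ d : Q0 → ℕ, Rep K Q0 Q1 s t d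

/-- A set of `KQ`-modules is a semibrick if its elements are bricks and there are no
nonzero homomorphisms between distinct elements. -/
def IsSemibrickP (S : Set (ModPtP K Q0 Q1 s t)) : Prop :=
  (∀ B ∈ S, IsBrick K Q0 Q1 s t B.2) ∧
  ∀ B ∈ S, ∀ B' ∈ S, B ≠ B' → RepHom K Q0 Q1 s t B.2 B'.2 = ⊥

/-- For representations of the (hereditary) path algebra `KQ`, the self-extension space
`Ext¹(M,N)` is the cokernel of this map; in particular `Ext¹(M,N) = 0` iff it is surjective. -/
def extMap {d c : Q0 → ℕ} (M : Rep K Q0 Q1 s t d) (N : Rep K Q0 Q1 s t c) :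
    (∀ i : Q0, Matrix (Fin (c i)) (Fin (d i)) K) →ₗ[K]
      (∀ a : Q1, Matrix (Fin (c (t a))) (Fin (d (s a))) K) where
  toFun f := fun a => f (t a) * M a - N a * f (s a)
  map_add' f g := by
    funext a
    simp only [Pi.add_apply, Matrix.add_mul, Matrix.mul_add]
    abel
  map_smul' k f := by
    funext a
    simp only [Pi.smul_apply, Matrix.smul_mul, Matrix.mul_smul, smul_sub, RingHom.id_apply]

/-- A brick `B` over the path algebra is exceptional if `Ext¹(B,B) = 0`. -/
def IsExceptional {d : Q0 → ℕ} (B : Rep K Q0 Q1 s t d) : Prop :=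
  IsBrick K Q0 Q1 s t B ∧ Function.Surjective (extMap K Q0 Q1 s t B B)

end RepScheme

namespace RepSchemeAux

open Polynomial


private lemma map_mulVec {K R : Type} [CommRing R] [CommRing K] (φ : R →+* K)
    {σ κ : Type} [Fintype σ] (A : Matrix κ σ R) (v : σ → R) :
    (A.map φ).mulVec (fun x => φ (v x)) = fun y => φ (A.mulVec v y) := by
  funext y
  simp [Matrix.mulVec, dotProduct, map_sum, map_mul, Matrix.map_apply]

private lemma gen_poly {K : Type} [Field K] {σ κ : Type} [Fintype σ] [Fintype κ]
    [DecidableEq σ] [DecidableEq κ]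
    (A : Matrix κ σ (Polynomial K))
    (hA : ∀ v : σ → Polynomial K, A.mulVec v = 0 → v = 0) :
    ∃ p : Polynomial K, p ≠ 0 ∧ ∀ τ : K, Polynomial.eval τ p ≠ 0 →
      ∀ w : σ → K, (A.map (Polynomial.eval τ)).mulVec w = 0 → w = 0 := by
  classical
  let F := FractionRing (Polynomial K)
  let alg : Polynomial K →+* F := algebraMap (Polynomial K) F
  have halg : Function.Injective alg := IsFractionRing.injective (Polynomial K) F
  have hb0 : ∀ b : nonZeroDivisors (Polynomial K), alg (b : Polynomial K) ≠ 0 := by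
    intro b h
    exact nonZeroDivisors.ne_zero b.2 (halg (by simpa using h))
  -- injectivity over F
  have hinj : LinearMap.ker (Matrix.toLin' (A.map alg)) = ⊥ := by
    rw [LinearMap.ker_eq_bot']
    intro v hv
    have hv' : (A.map alg).mulVec v = 0 := by
      rw [← hv]; rfl
    obtain ⟨b, hb⟩ := IsLocalization.exist_integer_multiples (nonZeroDivisors (Polynomial K))
      Finset.univ v
    choose w hw using fun x : σ => hb x (Finset.mem_univ x)
    have hmv : A.mulVec w = 0 := by
      have h1 : (A.map alg).mulVec (fun x => alg (w x)) = fun y => alg (A.mulVec w y) :=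
        map_mulVec alg A w
      have h2 : (fun x => alg (w x)) = fun x => (b : Polynomial K) • v x := by
        funext x; exact hw x
      rw [h2] at h1
      have h3 : (A.map alg).mulVec (fun x => (b : Polynomial K) • v x) = 0 := by
        have : (fun x => (b : Polynomial K) • v x) = (b : Polynomial K) • v := rfl
        rw [this, Matrix.mulVec_smul, hv', smul_zero]
      rw [h3] at h1
      funext y
      apply halg
      have := congrFun h1.symm y
      simpa using this
    have hw0 : w = 0 := hA w hmv
    funext x
    have hx : alg (w x) = (b : Polynomial K) • v x := hw x
    rw [hw0] at hx
    simp only [Pi.zero_apply, map_zero] at hx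
    have := hx.symm
    rw [Algebra.smul_def] at this
    rcases mul_eq_zero.mp this with h | h
    · exact absurd h (hb0 b)
    · exact h
  -- left inverse over F
  obtain ⟨g, hg⟩ := LinearMap.exists_leftInverse_of_injective _ hinj
  have hBA : (LinearMap.toMatrix' g) * (A.map alg) = 1 := by
    have := congrArg LinearMap.toMatrix' hg
    rw [LinearMap.toMatrix'_comp] at this
    rw [LinearMap.toMatrix'_toLin'] at this
    simpa using this
  -- clear denominators of the left inverse
  obtain ⟨q, hq⟩ := IsLocalization.exist_integer_multiples (nonZeroDivisors (Polynomial K))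
    Finset.univ (fun xy : σ × κ => LinearMap.toMatrix' g xy.1 xy.2)
  choose P hP using fun xy : σ × κ => hq xy (Finset.mem_univ xy)
  let Pm : Matrix σ κ (Polynomial K) := Matrix.of fun x y => P (x, y)
  have hPm : Pm.map alg = (alg (q : Polynomial K)) • (LinearMap.toMatrix' g) := by
    ext x y
    show alg (P (x, y)) = _
    rw [hP (x, y), Algebra.smul_def]
    rfl
  set p : Polynomial K := (Pm * A).det with hp
  have hpalg : alg p = (alg (q : Polynomial K)) ^ (Fintype.card σ) := by
    rw [hp, RingHom.map_det]
    have : (alg.mapMatrix (Pm * A) : Matrix σ σ F) = (Pm * A).map alg := rfl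
    rw [this, Matrix.map_mul, hPm, Matrix.smul_mul, hBA]
    simp [Matrix.det_smul]
  have hpne : p ≠ 0 := by
    intro h
    rw [h, map_zero] at hpalg
    exact pow_ne_zero _ (hb0 q) hpalg.symm
  refine ⟨p, hpne, ?_⟩
  intro τ hτ w hw
  by_contra hw0
  have hcoe : Polynomial.eval τ = ⇑(Polynomial.evalRingHom τ) := rfl
  rw [hcoe] at hw
  have hdet : ((Pm * A).map ⇑(Polynomial.evalRingHom τ)).det = 0 := by
    apply Matrix.exists_mulVec_eq_zero_iff.mp
    refine ⟨w, hw0, ?_⟩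
    rw [Matrix.map_mul, ← Matrix.mulVec_mulVec, hw, Matrix.mulVec_zero]
  rw [← RingHom.mapMatrix_apply, ← RingHom.map_det] at hdet
  exact hτ (by simpa using hdet)


variable {K : Type} [Field K]
variable {Q0 Q1 : Type} [Fintype Q0] [Fintype Q1]
variable {s t : Q1 → Q0}

/-- Coordinate equivalence for tuples of matrices. -/
def coordEquiv (R : Type) [CommRing R] (e c : Q0 → ℕ) :
    (∀ i : Q0, Matrix (Fin (c i)) (Fin (e i)) R) ≃ₗ[R]
      ((Σ i : Q0, Fin (c i) × Fin (e i)) → R) where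
  toFun f := fun x => f x.1 x.2.1 x.2.2
  invFun g := fun i => Matrix.of fun r c' => g ⟨i, (r, c')⟩
  map_add' _ _ := rfl
  map_smul' _ _ := rfl
  left_inv f := rfl
  right_inv g := rfl

/-- The linear map whose kernel is `Hom(U-rep, W-rep)`. -/
def condMap (R : Type) [CommRing R] (e c : Q0 → ℕ)
    (U : ∀ a : Q1, Matrix (Fin (e (t a))) (Fin (e (s a))) R)
    (W : ∀ a : Q1, Matrix (Fin (c (t a))) (Fin (c (s a))) R) :
    (∀ i : Q0, Matrix (Fin (c i)) (Fin (e i)) R) →ₗ[R]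
      ((Σ a : Q1, Fin (c (t a)) × Fin (e (s a))) → R) where
  toFun f := fun x => (f (t x.1) * U x.1 - W x.1 * f (s x.1)) x.2.1 x.2.2
  map_add' f g := by
    funext x
    simp [Matrix.add_mul, Matrix.mul_add, Matrix.sub_apply, Matrix.add_apply]
    ring
  map_smul' k f := by
    funext x
    simp [Matrix.smul_mul, Matrix.mul_smul, Matrix.sub_apply, Matrix.smul_apply, smul_sub,
      mul_sub]

/-- Augmented version: additionally records one fixed matrix entry. -/
def condMapAug (R : Type) [CommRing R] (e : Q0 → ℕ)
    (U : ∀ a : Q1, Matrix (Fin (e (t a))) (Fin (e (s a))) R)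
    (i₀ : Q0) (r0 : Fin (e i₀)) :
    (∀ i : Q0, Matrix (Fin (e i)) (Fin (e i)) R) →ₗ[R]
      (Option (Σ a : Q1, Fin (e (t a)) × Fin (e (s a))) → R) where
  toFun f := fun x =>
    Option.rec (f i₀ r0 r0)
      (fun y => (f (t y.1) * U y.1 - U y.1 * f (s y.1)) y.2.1 y.2.2) x
  map_add' f g := by
    funext x
    cases x with
    | none => rfl
    | some y =>
      simp [Matrix.add_mul, Matrix.mul_add, Matrix.sub_apply, Matrix.add_apply]
      ring
  map_smul' k f := by
    funext x
    cases x with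
    | none => rfl
    | some y =>
      simp [Matrix.smul_mul, Matrix.mul_smul, Matrix.sub_apply, Matrix.smul_apply, smul_sub,
      mul_sub]

lemma condMap_eq_zero_iff (R : Type) [CommRing R] (e c : Q0 → ℕ)
    (U : ∀ a : Q1, Matrix (Fin (e (t a))) (Fin (e (s a))) R)
    (W : ∀ a : Q1, Matrix (Fin (c (t a))) (Fin (c (s a))) R)
    (f : ∀ i : Q0, Matrix (Fin (c i)) (Fin (e i)) R) :
    condMap (s := s) (t := t) R e c U W f = 0 ↔ ∀ a : Q1, f (t a) * U a = W a * f (s a) := by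
  constructor
  · intro h a
    ext r c'
    have := congrFun h ⟨a, (r, c')⟩
    simpa [condMap, sub_eq_zero] using this
  · intro h
    funext x
    simp [condMap, h x.1]

/-- Commutation of `condMap` with entrywise application of a ring hom. -/
lemma condMap_map (R : Type) [CommRing R] (φ : R →+* K) (e c : Q0 → ℕ)
    (U : ∀ a : Q1, Matrix (Fin (e (t a))) (Fin (e (s a))) R)
    (W : ∀ a : Q1, Matrix (Fin (c (t a))) (Fin (c (s a))) R)
    (f : ∀ i : Q0, Matrix (Fin (c i)) (Fin (e i)) R)
    (x : Σ a : Q1, Fin (c (t a)) × Fin (e (s a))) :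
    φ (condMap (s := s) (t := t) R e c U W f x)
      = condMap (s := s) (t := t) K e c (fun a => (U a).map φ) (fun a => (W a).map φ)
          (fun i => (f i).map φ) x := by
  simp [condMap, Matrix.sub_apply, Matrix.mul_apply, map_sub, map_sum, map_mul,
    Matrix.map_apply]

lemma condMapAug_map (R : Type) [CommRing R] (φ : R →+* K) (e : Q0 → ℕ)
    (U : ∀ a : Q1, Matrix (Fin (e (t a))) (Fin (e (s a))) R)
    (i₀ : Q0) (r0 : Fin (e i₀))
    (f : ∀ i : Q0, Matrix (Fin (e i)) (Fin (e i)) R)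
    (x : Option (Σ a : Q1, Fin (e (t a)) × Fin (e (s a)))) :
    φ (condMapAug (s := s) (t := t) R e U i₀ r0 f x)
      = condMapAug (s := s) (t := t) K e (fun a => (U a).map φ) i₀ r0
          (fun i => (f i).map φ) x := by
  cases x with
  | none => simp [condMapAug, Matrix.map_apply]
  | some y =>
    simp [condMapAug, Matrix.sub_apply, Matrix.mul_apply, map_sub, map_sum, map_mul,
      Matrix.map_apply]

lemma coordEquiv_symm_map (R : Type) [CommRing R] (φ : R →+* K) (e c : Q0 → ℕ)
    (g : (Σ i : Q0, Fin (c i) × Fin (e i)) → R) :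
    (fun i => (((coordEquiv (Q0 := Q0) R e c).symm g) i).map φ)
      = (coordEquiv (Q0 := Q0) K e c).symm (fun x => φ (g x)) := rfl

lemma cond_generic (e c : Q0 → ℕ)
    (Up : ∀ a : Q1, Matrix (Fin (e (t a))) (Fin (e (s a))) (Polynomial K))
    (Wp : ∀ a : Q1, Matrix (Fin (c (t a))) (Fin (c (s a))) (Polynomial K))
    (hker : ∀ v : ∀ i : Q0, Matrix (Fin (c i)) (Fin (e i)) (Polynomial K),
       (∀ a : Q1, v (t a) * Up a = Wp a * v (s a)) → v = 0) :
    ∃ p : Polynomial K, p ≠ 0 ∧ ∀ τ : K, Polynomial.eval τ p ≠ 0 →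
      ∀ f : ∀ i : Q0, Matrix (Fin (c i)) (Fin (e i)) K,
        (∀ a : Q1, f (t a) * (Up a).map (Polynomial.eval τ)
            = (Wp a).map (Polynomial.eval τ) * f (s a)) → f = 0 := by
  classical
  set L := (condMap (s := s) (t := t) (Polynomial K) e c Up Wp).comp
      (coordEquiv (Polynomial K) e c).symm.toLinearMap with hL
  set A := LinearMap.toMatrix' L with hA'
  have hmv : ∀ v, A.mulVec v = L v := by
    intro v
    rw [← Matrix.toLin'_apply, hA', Matrix.toLin'_toMatrix']
  have hA : ∀ v, A.mulVec v = 0 → v = 0 := by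
    intro v hv
    rw [hmv] at hv
    have h2 := hker ((coordEquiv (Polynomial K) e c).symm v)
      ((condMap_eq_zero_iff _ _ _ _ _ _).mp hv)
    have := congrArg (coordEquiv (Polynomial K) e c) h2
    simpa using this
  obtain ⟨p, hp, hgood⟩ := gen_poly A hA
  refine ⟨p, hp, ?_⟩
  intro τ hτ f hf
  have hAev : A.map (Polynomial.eval τ) = LinearMap.toMatrix'
      ((condMap (s := s) (t := t) K e c (fun a => (Up a).map (Polynomial.eval τ))
          (fun a => (Wp a).map (Polynomial.eval τ))).comp
        (coordEquiv K e c).symm.toLinearMap) := by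
    ext x y
    rw [Matrix.map_apply, hA', LinearMap.toMatrix'_apply, LinearMap.toMatrix'_apply]
    show Polynomial.eval τ
        ((condMap (s := s) (t := t) (Polynomial K) e c Up Wp)
          ((coordEquiv (Polynomial K) e c).symm (Pi.single y 1)) x) = _
    rw [show (Polynomial.eval τ : Polynomial K → K) = ⇑(Polynomial.evalRingHom τ) from rfl]
    rw [condMap_map (s := s) (t := t) (Polynomial K) (Polynomial.evalRingHom τ)]
    rw [coordEquiv_symm_map]
    have hvec : (fun x' => (Polynomial.evalRingHom τ) ((Pi.single y (1 : Polynomial K) : _ → Polynomial K) x'))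
        = (Pi.single y (1 : K) : _ → K) := by
      funext x'
      by_cases h : x' = y <;> simp [h]
    rw [hvec]
    rfl
  have hker2 : (A.map (Polynomial.eval τ)).mulVec (coordEquiv K e c f) = 0 := by
    rw [hAev]
    have : (LinearMap.toMatrix'
        ((condMap (s := s) (t := t) K e c (fun a => (Up a).map (Polynomial.eval τ))
            (fun a => (Wp a).map (Polynomial.eval τ))).comp
          (coordEquiv K e c).symm.toLinearMap)).mulVec (coordEquiv K e c f)
        = (condMap (s := s) (t := t) K e c (fun a => (Up a).map (Polynomial.eval τ))
            (fun a => (Wp a).map (Polynomial.eval τ)))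
            ((coordEquiv K e c).symm ((coordEquiv K e c) f)) := by
      rw [← Matrix.toLin'_apply, Matrix.toLin'_toMatrix']
      rfl
    rw [this, LinearEquiv.symm_apply_apply]
    exact (condMap_eq_zero_iff _ _ _ _ _ _).mpr hf
  have h0 := hgood τ hτ _ hker2
  have := congrArg (coordEquiv K e c).symm h0
  simpa using this

lemma cond_generic_aug (e : Q0 → ℕ)
    (Up : ∀ a : Q1, Matrix (Fin (e (t a))) (Fin (e (s a))) (Polynomial K))
    (i₀ : Q0) (r0 : Fin (e i₀))
    (hker : ∀ v : ∀ i : Q0, Matrix (Fin (e i)) (Fin (e i)) (Polynomial K),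
       (∀ a : Q1, v (t a) * Up a = Up a * v (s a)) → v i₀ r0 r0 = 0 → v = 0) :
    ∃ p : Polynomial K, p ≠ 0 ∧ ∀ τ : K, Polynomial.eval τ p ≠ 0 →
      ∀ f : ∀ i : Q0, Matrix (Fin (e i)) (Fin (e i)) K,
        (∀ a : Q1, f (t a) * (Up a).map (Polynomial.eval τ)
            = (Up a).map (Polynomial.eval τ) * f (s a)) → f i₀ r0 r0 = 0 → f = 0 := by
  classical
  set L := (condMapAug (s := s) (t := t) (Polynomial K) e Up i₀ r0).comp
      (coordEquiv (Polynomial K) e e).symm.toLinearMap with hL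
  set A := LinearMap.toMatrix' L with hA'
  have hmv : ∀ v, A.mulVec v = L v := by
    intro v
    rw [← Matrix.toLin'_apply, hA', Matrix.toLin'_toMatrix']
  have haux : ∀ g : ∀ i : Q0, Matrix (Fin (e i)) (Fin (e i)) (Polynomial K),
      condMapAug (s := s) (t := t) (Polynomial K) e Up i₀ r0 g = 0 →
      (∀ a : Q1, g (t a) * Up a = Up a * g (s a)) ∧ g i₀ r0 r0 = 0 := by
    intro g hg
    constructor
    · intro a
      refine Matrix.ext fun r c' => ?_
      have := congrFun hg (some ⟨a, (r, c')⟩)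
      simpa [condMapAug, sub_eq_zero] using this
    · simpa [condMapAug] using congrFun hg none
  have hA : ∀ v, A.mulVec v = 0 → v = 0 := by
    intro v hv
    rw [hmv] at hv
    obtain ⟨h1, h2⟩ := haux ((coordEquiv (Polynomial K) e e).symm v) hv
    have h3 := hker ((coordEquiv (Polynomial K) e e).symm v) h1 h2
    have := congrArg (coordEquiv (Polynomial K) e e) h3
    simpa using this
  obtain ⟨p, hp, hgood⟩ := gen_poly A hA
  refine ⟨p, hp, ?_⟩
  intro τ hτ f hf hf0
  have hAev : A.map (Polynomial.eval τ) = LinearMap.toMatrix'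
      ((condMapAug (s := s) (t := t) K e (fun a => (Up a).map (Polynomial.eval τ)) i₀ r0).comp
        (coordEquiv K e e).symm.toLinearMap) := by
    ext x y
    rw [Matrix.map_apply, hA', LinearMap.toMatrix'_apply, LinearMap.toMatrix'_apply]
    show Polynomial.eval τ
        ((condMapAug (s := s) (t := t) (Polynomial K) e Up i₀ r0)
          ((coordEquiv (Polynomial K) e e).symm (Pi.single y 1)) x) = _
    rw [show (Polynomial.eval τ : Polynomial K → K) = ⇑(Polynomial.evalRingHom τ) from rfl]
    rw [condMapAug_map (s := s) (t := t) (Polynomial K) (Polynomial.evalRingHom τ)]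
    rw [coordEquiv_symm_map]
    have hvec : (fun x' => (Polynomial.evalRingHom τ) ((Pi.single y (1 : Polynomial K) : _ → Polynomial K) x'))
        = (Pi.single y (1 : K) : _ → K) := by
      funext x'
      by_cases h : x' = y <;> simp [h]
    rw [hvec]
    rfl
  have hker2 : (A.map (Polynomial.eval τ)).mulVec (coordEquiv K e e f) = 0 := by
    rw [hAev]
    have heq : (LinearMap.toMatrix'
        ((condMapAug (s := s) (t := t) K e (fun a => (Up a).map (Polynomial.eval τ)) i₀ r0).comp
          (coordEquiv K e e).symm.toLinearMap)).mulVec (coordEquiv K e e f)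
        = (condMapAug (s := s) (t := t) K e (fun a => (Up a).map (Polynomial.eval τ)) i₀ r0)
            ((coordEquiv K e e).symm ((coordEquiv K e e) f)) := by
      rw [← Matrix.toLin'_apply, Matrix.toLin'_toMatrix']
      rfl
    rw [heq, LinearEquiv.symm_apply_apply]
    funext x
    cases x with
    | none => simpa [condMapAug] using hf0
    | some y => simp [condMapAug, hf y.1]
  have h0 := hgood τ hτ _ hker2
  have := congrArg (coordEquiv K e e).symm h0
  simpa using this

section Coeff

variable {K : Type} [Field K]

/-- Entrywise coefficient extraction of a polynomial matrix. -/
def cf {m n : Type} (k : ℕ) (P : Matrix m n (Polynomial K)) : Matrix m n K :=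
  P.map (fun p => p.coeff k)

lemma cf_add {m n : Type} (k : ℕ) (P Q : Matrix m n (Polynomial K)) :
    cf k (P + Q) = cf k P + cf k Q := by
  ext r c
  simp [cf, Polynomial.coeff_add]

lemma cf_mul_C {m n o : Type} [Fintype n] (k : ℕ) (P : Matrix m n (Polynomial K))
    (Mk : Matrix n o K) : cf k (P * Mk.map Polynomial.C) = cf k P * Mk := by
  ext r c
  simp only [cf, Matrix.map_apply, Matrix.mul_apply]
  rw [← Polynomial.lcoeff_apply, map_sum]
  congr 1
  funext j
  simp [Polynomial.lcoeff_apply, Polynomial.coeff_mul_C]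

lemma cf_C_mul {m n o : Type} [Fintype n] (k : ℕ) (Mk : Matrix m n K)
    (P : Matrix n o (Polynomial K)) : cf k (Mk.map Polynomial.C * P) = Mk * cf k P := by
  ext r c
  simp only [cf, Matrix.map_apply, Matrix.mul_apply]
  rw [← Polynomial.lcoeff_apply, map_sum]
  congr 1
  funext j
  simp [Polynomial.lcoeff_apply, Polynomial.coeff_C_mul]

lemma cf_X_smul_succ {m n : Type} (k : ℕ) (P : Matrix m n (Polynomial K)) :
    cf (k + 1) ((Polynomial.X : Polynomial K) • P) = cf k P := by
  ext r c
  simp [cf, Polynomial.coeff_X_mul]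

lemma cf_X_smul_zero {m n : Type} (P : Matrix m n (Polynomial K)) :
    cf 0 ((Polynomial.X : Polynomial K) • P) = 0 := by
  refine Matrix.ext fun r c => ?_
  simp only [cf, Matrix.map_apply, Matrix.smul_apply, smul_eq_mul, Matrix.zero_apply]
  rw [Polynomial.mul_coeff_zero]
  simp

lemma cf_eq_zero_iff {m n : Type} (P : Matrix m n (Polynomial K)) :
    P = 0 ↔ ∀ k : ℕ, cf k P = 0 := by
  constructor
  · intro h k
    rw [h]
    refine Matrix.ext fun r c => ?_
    simp [cf, Matrix.map_apply]
  · intro h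
    refine Matrix.ext fun r c => ?_
    refine Polynomial.ext fun k => ?_
    have := congrFun (congrFun (h k) r) c
    simpa [cf, Matrix.map_apply] using this

end Coeff

end RepSchemeAux

namespace RepScheme

open Polynomial RepSchemeAux

set_option maxHeartbeats 1600000 in
private theorem core_extension
    (K : Type) [Field K] [IsAlgClosed K]
    (Q0 Q1 : Type) [Fintype Q0] [Fintype Q1] (s t : Q1 → Q0)
    (S : Set (ModPtP K Q0 Q1 s t))
    (hsb : IsSemibrickP K Q0 Q1 s t S)
    (hfin : S.Finite)
    (B : ModPtP K Q0 Q1 s t) (hB : B ∈ S)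
    (hnotexc : ¬ Function.Surjective (extMap K Q0 Q1 s t B.2 B.2)) :
    ∃ B' : Rep K Q0 Q1 s t B.1, ((⟨B.1, B'⟩ : ModPtP K Q0 Q1 s t) ∉ S) ∧
      IsSemibrickP K Q0 Q1 s t (insert ⟨B.1, B'⟩ S) := by
  classical
  set d : Q0 → ℕ := B.1 with hd
  set M : Rep K Q0 Q1 s t d := B.2 with hM
  have hmem : ∀ {e c : Q0 → ℕ} (U : Rep K Q0 Q1 s t e) (W : Rep K Q0 Q1 s t c)
      (f : ∀ i : Q0, Matrix (Fin (c i)) (Fin (e i)) K),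
      f ∈ RepHom K Q0 Q1 s t U W ↔ ∀ a : Q1, f (t a) * U a = W a * f (s a) := by
    intro e c U W f
    rfl
  have hbrick : Module.finrank K (RepHom K Q0 Q1 s t M M) = 1 := hsb.1 B hB
  -- a nonzero dimension entry
  have hnontriv : ∃ i₀ : Q0, 0 < d i₀ := by
    by_contra h
    push_neg at h
    haveI hsing : Subsingleton (∀ i : Q0, Matrix (Fin (d i)) (Fin (d i)) K) := by
      constructor
      intro f g
      funext i r c
      have : d i = 0 := Nat.le_zero.mp (h i)
      exact absurd r.isLt (by omega)
    have : Module.finrank K (RepHom K Q0 Q1 s t M M) = 0 := by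
      haveI : Subsingleton (RepHom K Q0 Q1 s t M M) := by
        constructor
        intro f g
        exact Subtype.ext (Subsingleton.elim _ _)
      exact Module.finrank_zero_of_subsingleton
    omega
  obtain ⟨i₀, hi₀⟩ := hnontriv
  set r0 : Fin (d i₀) := ⟨0, hi₀⟩ with hr0
  -- the identity endomorphism
  set idm : ∀ i : Q0, Matrix (Fin (d i)) (Fin (d i)) K := fun i => 1 with hidm
  have hidmem : idm ∈ RepHom K Q0 Q1 s t M M := by
    rw [hmem]
    intro a
    simp [hidm]
  have hidne : idm ≠ 0 := by
    intro h
    have := congrFun (congrFun (congrFun h i₀) r0) r0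
    simp [hidm, Matrix.one_apply_eq] at this
  -- endomorphisms are scalar
  have hEnd : ∀ g : ∀ i : Q0, Matrix (Fin (d i)) (Fin (d i)) K,
      (∀ a : Q1, g (t a) * M a = M a * g (s a)) → ∃ cc : K, g = cc • idm := by
    have hspan : Submodule.span K {idm} = RepHom K Q0 Q1 s t M M := by
      apply Submodule.eq_of_le_of_finrank_le
      · rw [Submodule.span_le, Set.singleton_subset_iff]
        exact hidmem
      · rw [hbrick, finrank_span_singleton hidne]
    intro g hg
    have : g ∈ Submodule.span K {idm} := by
      rw [hspan, hmem]
      exact hg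
    rcases Submodule.mem_span_singleton.mp this with ⟨c, hc⟩
    exact ⟨c, hc.symm⟩
  -- a non-trivial extension class
  rw [Function.Surjective] at hnotexc
  push_neg at hnotexc
  obtain ⟨Z, hZ⟩ := hnotexc
  have hext : ∀ (f : ∀ i : Q0, Matrix (Fin (d i)) (Fin (d i)) K) (a : Q1),
      extMap K Q0 Q1 s t M M f a = f (t a) * M a - M a * f (s a) := fun f a => rfl
  -- polynomial matrix families
  set PM : ∀ a : Q1, Matrix (Fin (d (t a))) (Fin (d (s a))) (Polynomial K) :=
    fun a => (M a).map Polynomial.C with hPM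
  set PZ : ∀ a : Q1, Matrix (Fin (d (t a))) (Fin (d (s a))) (Polynomial K) :=
    fun a => (Z a).map Polynomial.C with hPZ
  set YR : ∀ a : Q1, Matrix (Fin (d (t a))) (Fin (d (s a))) (Polynomial K) :=
    fun a => PM a + (Polynomial.X : Polynomial K) • PZ a with hYR
  -- coefficients of products with the family
  have hYmulL0 : ∀ (a : Q1) {o : Type} (P : Matrix (Fin (d (s a))) o (Polynomial K)),
      cf 0 (YR a * P) = M a * cf 0 P := by
    intro a o P
    rw [hYR, Matrix.add_mul, Matrix.smul_mul, cf_add, hPM, cf_C_mul,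
      cf_X_smul_zero, add_zero]
  have hYmulLS : ∀ (a : Q1) {o : Type} (P : Matrix (Fin (d (s a))) o (Polynomial K)) (k : ℕ),
      cf (k+1) (YR a * P) = M a * cf (k+1) P + Z a * cf k P := by
    intro a o P k
    rw [hYR, Matrix.add_mul, Matrix.smul_mul, cf_add, hPM, cf_C_mul,
      cf_X_smul_succ, hPZ, cf_C_mul]
  have hYmulR0 : ∀ (a : Q1) {o : Type} [Fintype (Fin (d (t a)))] (P : Matrix o (Fin (d (t a))) (Polynomial K)),
      cf 0 (P * YR a) = cf 0 P * M a := by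
    intro a o _ P
    rw [hYR, Matrix.mul_add, Matrix.mul_smul, cf_add, hPM, cf_mul_C,
      cf_X_smul_zero, add_zero]
  have hYmulRS : ∀ (a : Q1) {o : Type} (P : Matrix o (Fin (d (t a))) (Polynomial K)) (k : ℕ),
      cf (k+1) (P * YR a) = cf (k+1) P * M a + cf k P * Z a := by
    intro a o P k
    rw [hYR, Matrix.mul_add, Matrix.mul_smul, cf_add, hPM, cf_mul_C,
      cf_X_smul_succ, hPZ, cf_mul_C]
  -- kernel lemma for Hom(B, Y(τ))
  have hker1 : ∀ v : ∀ i : Q0, Matrix (Fin (d i)) (Fin (d i)) (Polynomial K),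
      (∀ a : Q1, v (t a) * PM a = YR a * v (s a)) → v = 0 := by
    intro v hv
    by_contra hv0
    have hex : ∃ k : ℕ, (fun i => cf k (v i)) ≠ 0 := by
      by_contra hall
      push_neg at hall
      apply hv0
      funext i
      show v i = 0
      rw [cf_eq_zero_iff]
      intro k
      exact congrFun (hall k) i
    set k₀ := Nat.find hex with hk₀
    have hk0 : (fun i => cf k₀ (v i)) ≠ 0 := Nat.find_spec hex
    have hmin : ∀ j, j < k₀ → (fun i => cf j (v i)) = 0 := by
      intro j hj
      by_contra hne
      exact Nat.find_min hex hj hne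
    have E0 : ∀ a : Q1, cf 0 (v (t a)) * M a = M a * cf 0 (v (s a)) := by
      intro a
      have h := congrArg (cf 0) (hv a)
      rw [hPM, cf_mul_C, hYmulL0] at h
      exact h
    have ES : ∀ (k : ℕ) (a : Q1), cf (k+1) (v (t a)) * M a
        = M a * cf (k+1) (v (s a)) + Z a * cf k (v (s a)) := by
      intro k a
      have h := congrArg (cf (k+1)) (hv a)
      rw [hPM, cf_mul_C, hYmulLS] at h
      exact h
    have hprevcase : k₀ = 0 ∨ ∃ j, k₀ = j + 1 ∧ (fun i => cf j (v i)) = 0 := by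
      rcases Nat.eq_zero_or_pos k₀ with h0 | hpos
      · exact Or.inl h0
      · exact Or.inr ⟨k₀ - 1, (Nat.succ_pred_eq_of_pos hpos).symm,
          hmin _ (by omega)⟩
    have hsc : ∀ a : Q1, cf k₀ (v (t a)) * M a = M a * cf k₀ (v (s a)) := by
      intro a
      rcases hprevcase with h0 | ⟨j, hj, hjz⟩
      · rw [h0]; exact E0 a
      · rw [hj]
        have := ES j a
        rw [congrFun hjz (s a)] at this
        simpa using this
    obtain ⟨c, hc⟩ := hEnd (fun i => cf k₀ (v i)) hsc
    have hcne : c ≠ 0 := by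
      intro h
      apply hk0
      rw [hc, h, zero_smul]
    have hstep : extMap K Q0 Q1 s t M M (c⁻¹ • fun i => cf (k₀+1) (v i)) = Z := by
      funext a
      rw [hext]
      have h1 := ES k₀ a
      have h2 : cf k₀ (v (s a)) = c • (1 : Matrix (Fin (d (s a))) (Fin (d (s a))) K) := by
        have := congrFun hc (s a)
        simpa [hidm] using this
      rw [h2, Matrix.mul_smul, Matrix.mul_one] at h1
      show c⁻¹ • cf (k₀+1) (v (t a)) * M a - M a * (c⁻¹ • cf (k₀+1) (v (s a))) = Z a
      rw [Matrix.smul_mul, Matrix.mul_smul, h1]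
      rw [smul_add, smul_smul, inv_mul_cancel₀ hcne, one_smul]
      abel
    exact hZ _ hstep
  -- kernel lemma for Hom(Y(τ), B)
  have hker2 : ∀ v : ∀ i : Q0, Matrix (Fin (d i)) (Fin (d i)) (Polynomial K),
      (∀ a : Q1, v (t a) * YR a = PM a * v (s a)) → v = 0 := by
    intro v hv
    by_contra hv0
    have hex : ∃ k : ℕ, (fun i => cf k (v i)) ≠ 0 := by
      by_contra hall
      push_neg at hall
      apply hv0
      funext i
      show v i = 0
      rw [cf_eq_zero_iff]
      intro k
      exact congrFun (hall k) i
    set k₀ := Nat.find hex with hk₀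
    have hk0 : (fun i => cf k₀ (v i)) ≠ 0 := Nat.find_spec hex
    have hmin : ∀ j, j < k₀ → (fun i => cf j (v i)) = 0 := by
      intro j hj
      by_contra hne
      exact Nat.find_min hex hj hne
    have E0 : ∀ a : Q1, cf 0 (v (t a)) * M a = M a * cf 0 (v (s a)) := by
      intro a
      have h := congrArg (cf 0) (hv a)
      rw [hPM, cf_C_mul, hYmulR0] at h
      exact h
    have ES : ∀ (k : ℕ) (a : Q1), cf (k+1) (v (t a)) * M a + cf k (v (t a)) * Z a
        = M a * cf (k+1) (v (s a)) := by
      intro k a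
      have h := congrArg (cf (k+1)) (hv a)
      rw [hPM, cf_C_mul, hYmulRS] at h
      exact h
    have hprevcase : k₀ = 0 ∨ ∃ j, k₀ = j + 1 ∧ (fun i => cf j (v i)) = 0 := by
      rcases Nat.eq_zero_or_pos k₀ with h0 | hpos
      · exact Or.inl h0
      · exact Or.inr ⟨k₀ - 1, (Nat.succ_pred_eq_of_pos hpos).symm,
          hmin _ (by omega)⟩
    have hsc : ∀ a : Q1, cf k₀ (v (t a)) * M a = M a * cf k₀ (v (s a)) := by
      intro a
      rcases hprevcase with h0 | ⟨j, hj, hjz⟩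
      · rw [h0]; exact E0 a
      · rw [hj]
        have := ES j a
        rw [congrFun hjz (t a)] at this
        simpa using this
    obtain ⟨c, hc⟩ := hEnd (fun i => cf k₀ (v i)) hsc
    have hcne : c ≠ 0 := by
      intro h
      apply hk0
      rw [hc, h, zero_smul]
    have hstep : extMap K Q0 Q1 s t M M ((-c)⁻¹ • fun i => cf (k₀+1) (v i)) = Z := by
      funext a
      rw [hext]
      have h1 := ES k₀ a
      have h2 : cf k₀ (v (t a)) = c • (1 : Matrix (Fin (d (t a))) (Fin (d (t a))) K) := by
        have := congrFun hc (t a)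
        simpa [hidm] using this
      rw [h2, Matrix.smul_mul, Matrix.one_mul] at h1
      show (-c)⁻¹ • cf (k₀+1) (v (t a)) * M a - M a * ((-c)⁻¹ • cf (k₀+1) (v (s a))) = Z a
      rw [Matrix.smul_mul, Matrix.mul_smul]
      have h3 : cf (k₀+1) (v (t a)) * M a - M a * cf (k₀+1) (v (s a)) = -(c • Z a) := by
        rw [← h1]
        abel
      rw [← smul_sub, h3]
      rw [smul_neg, smul_smul]
      rw [show ((-c)⁻¹ * c) = -1 by field_simp]
      simp
    exact hZ _ hstep
  -- evaluation facts
  have hCev : ∀ {m n : Type} (Q : Matrix m n K) (τ : K),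
      (Q.map Polynomial.C).map (Polynomial.eval τ) = Q := by
    intro m n Q τ
    refine Matrix.ext fun r c => ?_
    simp [Matrix.map_apply]
  have hYev : ∀ (τ : K) (a : Q1), (YR a).map (Polynomial.eval τ) = M a + τ • Z a := by
    intro τ a
    refine Matrix.ext fun r c => ?_
    simp only [hYR, hPM, hPZ, Matrix.map_apply, Matrix.add_apply, Matrix.smul_apply,
      smul_eq_mul, Polynomial.eval_add, Polynomial.eval_mul, Polynomial.eval_X,
      Polynomial.eval_C]
    try ring
  have hPMev : ∀ (τ : K) (a : Q1), (PM a).map (Polynomial.eval τ) = M a := by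
    intro τ a
    rw [hPM]
    exact hCev (M a) τ
  -- for every N in S, a polynomial controlling Hom(N, Y(τ)) and Hom(Y(τ), N)
  have hS1 : ∀ N : ModPtP K Q0 Q1 s t, N ∈ S → ∃ p : Polynomial K, p ≠ 0 ∧
      ∀ τ : K, Polynomial.eval τ p ≠ 0 →
        (∀ f : ∀ i : Q0, Matrix (Fin (d i)) (Fin (N.1 i)) K,
            (∀ a : Q1, f (t a) * N.2 a = (M a + τ • Z a) * f (s a)) → f = 0) ∧
        (∀ f : ∀ i : Q0, Matrix (Fin (N.1 i)) (Fin (d i)) K,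
            (∀ a : Q1, f (t a) * (M a + τ • Z a) = N.2 a * f (s a)) → f = 0) := by
    intro N hN
    by_cases hNB : N = B
    · subst hNB
      obtain ⟨p1, hp1, h1⟩ := cond_generic (K := K) (s := s) (t := t) d d PM YR hker1
      obtain ⟨p2, hp2, h2⟩ := cond_generic (K := K) (s := s) (t := t) d d YR PM hker2
      refine ⟨p1 * p2, mul_ne_zero hp1 hp2, ?_⟩
      intro τ hτ
      rw [Polynomial.eval_mul] at hτ
      have hτ1 : Polynomial.eval τ p1 ≠ 0 := fun h => hτ (by rw [h, zero_mul])
      have hτ2 : Polynomial.eval τ p2 ≠ 0 := fun h => hτ (by rw [h, mul_zero])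
      constructor
      · intro f hf
        apply h1 τ hτ1 f
        intro a
        rw [hPMev, hYev]
        exact hf a
      · intro f hf
        apply h2 τ hτ2 f
        intro a
        rw [hPMev, hYev]
        exact hf a
    · have hbot1 : RepHom K Q0 Q1 s t N.2 M = ⊥ := hsb.2 N hN B hB hNB
      have hbot2 : RepHom K Q0 Q1 s t M N.2 = ⊥ :=
        hsb.2 B hB N hN (fun h => hNB h.symm)
      have hker3 : ∀ v : ∀ i : Q0, Matrix (Fin (d i)) (Fin (N.1 i)) (Polynomial K),
          (∀ a : Q1, v (t a) * (N.2 a).map Polynomial.C = YR a * v (s a)) → v = 0 := by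
        intro v hv
        have hallk : ∀ k : ℕ, (fun i => cf k (v i)) = 0 := by
          intro k
          induction k with
          | zero =>
            have hz : (fun i => cf 0 (v i)) ∈ RepHom K Q0 Q1 s t N.2 M := by
              rw [hmem]
              intro a
              have h := congrArg (cf 0) (hv a)
              rw [cf_mul_C, hYmulL0] at h
              exact h
            rw [hbot1] at hz
            exact (Submodule.mem_bot K).mp hz
          | succ k ih =>
            have hz : (fun i => cf (k+1) (v i)) ∈ RepHom K Q0 Q1 s t N.2 M := by
              rw [hmem]
              intro a
              have h := congrArg (cf (k+1)) (hv a)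
              rw [cf_mul_C, hYmulLS] at h
              have h0 : cf k (v (s a)) = 0 := congrFun ih (s a)
              rw [h0, Matrix.mul_zero, add_zero] at h
              exact h
            rw [hbot1] at hz
            exact (Submodule.mem_bot K).mp hz
        funext i
        show v i = 0
        rw [cf_eq_zero_iff]
        intro k
        exact congrFun (hallk k) i
      have hker3' : ∀ v : ∀ i : Q0, Matrix (Fin (N.1 i)) (Fin (d i)) (Polynomial K),
          (∀ a : Q1, v (t a) * YR a = (N.2 a).map Polynomial.C * v (s a)) → v = 0 := by
        intro v hv
        have hallk : ∀ k : ℕ, (fun i => cf k (v i)) = 0 := by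
          intro k
          induction k with
          | zero =>
            have hz : (fun i => cf 0 (v i)) ∈ RepHom K Q0 Q1 s t M N.2 := by
              rw [hmem]
              intro a
              have h := congrArg (cf 0) (hv a)
              rw [cf_C_mul, hYmulR0] at h
              exact h
            rw [hbot2] at hz
            exact (Submodule.mem_bot K).mp hz
          | succ k ih =>
            have hz : (fun i => cf (k+1) (v i)) ∈ RepHom K Q0 Q1 s t M N.2 := by
              rw [hmem]
              intro a
              have h := congrArg (cf (k+1)) (hv a)
              rw [cf_C_mul, hYmulRS] at h
              have h0 : cf k (v (t a)) = 0 := congrFun ih (t a)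
              rw [h0, Matrix.zero_mul, add_zero] at h
              exact h
            rw [hbot2] at hz
            exact (Submodule.mem_bot K).mp hz
        funext i
        show v i = 0
        rw [cf_eq_zero_iff]
        intro k
        exact congrFun (hallk k) i
      obtain ⟨p3, hp3, h3⟩ := cond_generic (K := K) (s := s) (t := t) N.1 d
        (fun a => (N.2 a).map Polynomial.C) YR hker3
      obtain ⟨p4, hp4, h4⟩ := cond_generic (K := K) (s := s) (t := t) d N.1 YR
        (fun a => (N.2 a).map Polynomial.C) hker3'
      refine ⟨p3 * p4, mul_ne_zero hp3 hp4, ?_⟩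
      intro τ hτ
      rw [Polynomial.eval_mul] at hτ
      have hτ3 : Polynomial.eval τ p3 ≠ 0 := fun h => hτ (by rw [h, zero_mul])
      have hτ4 : Polynomial.eval τ p4 ≠ 0 := fun h => hτ (by rw [h, mul_zero])
      constructor
      · intro f hf
        apply h3 τ hτ3 f
        intro a
        rw [hCev, hYev]
        exact hf a
      · intro f hf
        apply h4 τ hτ4 f
        intro a
        rw [hCev, hYev]
        exact hf a
  -- brick kernel lemma
  have hker4 : ∀ v : ∀ i : Q0, Matrix (Fin (d i)) (Fin (d i)) (Polynomial K),
      (∀ a : Q1, v (t a) * YR a = YR a * v (s a)) → v i₀ r0 r0 = 0 → v = 0 := by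
    intro v hv hv0
    have E0 : ∀ a : Q1, cf 0 (v (t a)) * M a = M a * cf 0 (v (s a)) := by
      intro a
      have h := congrArg (cf 0) (hv a)
      rw [hYmulR0, hYmulL0] at h
      exact h
    have ES : ∀ (k : ℕ) (a : Q1), cf (k+1) (v (t a)) * M a + cf k (v (t a)) * Z a
        = M a * cf (k+1) (v (s a)) + Z a * cf k (v (s a)) := by
      intro k a
      have h := congrArg (cf (k+1)) (hv a)
      rw [hYmulRS, hYmulLS] at h
      exact h
    have hsc : ∀ k : ℕ, ∃ ck : K, (fun i => cf k (v i)) = ck • idm := by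
      intro k
      induction k with
      | zero => exact hEnd _ E0
      | succ k ih =>
        obtain ⟨ck, hck⟩ := ih
        apply hEnd
        intro a
        have h := ES k a
        have h1 : cf k (v (t a)) = ck • (1 : Matrix (Fin (d (t a))) (Fin (d (t a))) K) := by
          have := congrFun hck (t a)
          simpa [hidm] using this
        have h2 : cf k (v (s a)) = ck • (1 : Matrix (Fin (d (s a))) (Fin (d (s a))) K) := by
          have := congrFun hck (s a)
          simpa [hidm] using this
        rw [h1, h2, Matrix.smul_mul, Matrix.one_mul, Matrix.mul_smul, Matrix.mul_one] at h
        exact add_right_cancel h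
    have hallk : ∀ k : ℕ, (fun i => cf k (v i)) = 0 := by
      intro k
      obtain ⟨ck, hck⟩ := hsc k
      have h1 := congrFun (congrFun (congrFun hck i₀) r0) r0
      have h2 : cf k (v i₀) r0 r0 = (0 : K) := by
        show ((v i₀).map (fun p => p.coeff k)) r0 r0 = 0
        rw [Matrix.map_apply, hv0]
        simp
      rw [h2] at h1
      have hc0 : ck = 0 := by
        have h3 : (ck • idm) i₀ r0 r0 = ck := by
          simp [hidm, Matrix.smul_apply, Matrix.one_apply_eq, smul_eq_mul]
        rw [h3] at h1
        exact h1.symm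
      rw [hck, hc0, zero_smul]
    funext i
    show v i = 0
    rw [cf_eq_zero_iff]
    intro k
    exact congrFun (hallk k) i
  obtain ⟨pb, hpb, hb4⟩ := cond_generic_aug (K := K) (s := s) (t := t) d YR i₀ r0 hker4
  -- choose the evaluation point
  choose pf hpf using hS1
  set T := hfin.toFinset with hT
  set q : Polynomial K := pb * ∏ x ∈ T.attach, pf x.1 (hfin.mem_toFinset.mp x.2) with hq
  have hq0 : q ≠ 0 := by
    apply mul_ne_zero hpb
    rw [Finset.prod_ne_zero_iff]
    intro x hx
    exact (hpf x.1 _).1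
  obtain ⟨τ, hτ⟩ : ∃ τ : K, Polynomial.eval τ q ≠ 0 := by
    have hfin' := Polynomial.finite_setOf_isRoot hq0
    obtain ⟨τ, hτ⟩ := (Set.Finite.infinite_compl hfin').nonempty
    exact ⟨τ, by simpa [Polynomial.IsRoot] using hτ⟩
  rw [hq, Polynomial.eval_mul] at hτ
  have hτb : Polynomial.eval τ pb ≠ 0 := fun h => hτ (by rw [h, zero_mul])
  have hτS : ∀ (N : ModPtP K Q0 Q1 s t) (hN : N ∈ S),
      Polynomial.eval τ (pf N hN) ≠ 0 := by
    intro N hN h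
    apply hτ
    rw [Polynomial.eval_prod,
      Finset.prod_eq_zero (Finset.mem_attach T ⟨N, hfin.mem_toFinset.mpr hN⟩) h, mul_zero]
  -- the new brick
  set Bp : Rep K Q0 Q1 s t d := fun a => M a + τ • Z a with hBp
  have hHom : ∀ (N : ModPtP K Q0 Q1 s t), N ∈ S → RepHom K Q0 Q1 s t N.2 Bp = ⊥ ∧
      RepHom K Q0 Q1 s t Bp N.2 = ⊥ := by
    intro N hN
    obtain ⟨h1, h2⟩ := (hpf N hN).2 τ (hτS N hN)
    constructor
    · rw [Submodule.eq_bot_iff]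
      intro f hf
      exact h1 f ((hmem _ _ f).mp hf)
    · rw [Submodule.eq_bot_iff]
      intro f hf
      exact h2 f ((hmem _ _ f).mp hf)
  have hBpmem : idm ∈ RepHom K Q0 Q1 s t Bp Bp := by
    rw [hmem]
    intro a
    simp [hidm]
  have hbBrick : IsBrick K Q0 Q1 s t Bp := by
    have hb4' := hb4 τ hτb
    have hinj : ∀ f : ∀ i : Q0, Matrix (Fin (d i)) (Fin (d i)) K,
        f ∈ RepHom K Q0 Q1 s t Bp Bp → f i₀ r0 r0 = 0 → f = 0 := by
      intro f hf hf0
      apply hb4' f ?_ hf0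
      intro a
      rw [hYev]
      exact ((hmem Bp Bp f).mp hf) a
    let φ : RepHom K Q0 Q1 s t Bp Bp →ₗ[K] K :=
      { toFun := fun f => (f : ∀ i : Q0, Matrix (Fin (d i)) (Fin (d i)) K) i₀ r0 r0,
        map_add' := fun f g => rfl,
        map_smul' := fun c f => rfl }
    have hφinj : Function.Injective φ := by
      intro f g hfg
      have h0 : ((f - g : RepHom K Q0 Q1 s t Bp Bp) :
          ∀ i : Q0, Matrix (Fin (d i)) (Fin (d i)) K) i₀ r0 r0 = 0 := by
        have : ((f - g : RepHom K Q0 Q1 s t Bp Bp) :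
            ∀ i : Q0, Matrix (Fin (d i)) (Fin (d i)) K) i₀ r0 r0 = φ f - φ g := rfl
        rw [this, hfg, sub_self]
      have hz := hinj _ (f - g).2 h0
      have : (f - g : RepHom K Q0 Q1 s t Bp Bp) = 0 := Subtype.ext hz
      exact sub_eq_zero.mp this
    have hle : Module.finrank K (RepHom K Q0 Q1 s t Bp Bp) ≤ 1 := by
      have h := LinearMap.finrank_le_finrank_of_injective hφinj
      simpa [Module.finrank_self] using h
    have hge : 1 ≤ Module.finrank K (RepHom K Q0 Q1 s t Bp Bp) := by
      have hsp : Submodule.span K {idm} ≤ RepHom K Q0 Q1 s t Bp Bp := by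
        rw [Submodule.span_le, Set.singleton_subset_iff]
        exact hBpmem
      have h := Submodule.finrank_mono hsp
      rw [finrank_span_singleton hidne] at h
      exact h
    show Module.finrank K (RepHom K Q0 Q1 s t Bp Bp) = 1
    omega
  have hnotin : (⟨d, Bp⟩ : ModPtP K Q0 Q1 s t) ∉ S := by
    intro hin
    have h := (hHom ⟨d, Bp⟩ hin).1
    rw [Submodule.eq_bot_iff] at h
    exact hidne (h idm hBpmem)
  refine ⟨Bp, hnotin, ?_, ?_⟩
  · intro C hC
    rcases Set.mem_insert_iff.mp hC with hCB | hCS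
    · rw [hCB]
      exact hbBrick
    · exact hsb.1 C hCS
  · intro C hC C' hC' hne
    rcases Set.mem_insert_iff.mp hC with hCB | hCS <;>
      rcases Set.mem_insert_iff.mp hC' with hC'B | hC'S
    · exact absurd (hCB.trans hC'B.symm) hne
    · rw [hCB]
      exact (hHom C' hC'S).2
    · rw [hC'B]
      exact (hHom C hCS).1
    · exact hsb.2 C hCS C' hC'S hne

end RepScheme

/-- **Theorem 3.16.** Let `Λ = KQ` with `Q` a finite acyclic quiver and `S` a finite
semibrick. If a brick `B ∈ S` is not exceptional, then there is a brick `B'` such that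
`S ⊔ {B'}` is a semibrick and `dim B'` is a positive integer multiple of `dim B`. -/
theorem RepScheme.path_algebra_semibrick_extension
    (K : Type) [Field K] [IsAlgClosed K]
    (Q0 Q1 : Type) [Fintype Q0] [Fintype Q1] (s t : Q1 → Q0)
    (hacyc : IsAcyclic Q0 Q1 s t)
    (S : Set (ModPtP K Q0 Q1 s t))
    (hsb : IsSemibrickP K Q0 Q1 s t S)
    (hfin : S.Finite)
    (B : ModPtP K Q0 Q1 s t) (hB : B ∈ S)
    (hnotexc : ¬ Function.Surjective (extMap K Q0 Q1 s t B.2 B.2)) :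
    ∃ (l : ℕ), 1 ≤ l ∧ ∃ B' : Rep K Q0 Q1 s t (fun i => l * B.1 i),
      ((⟨fun i => l * B.1 i, B'⟩ : ModPtP K Q0 Q1 s t) ∉ S) ∧
      IsSemibrickP K Q0 Q1 s t (insert ⟨fun i => l * B.1 i, B'⟩ S) := by
  classical
  obtain ⟨B', hnotin, hsb'⟩ := core_extension K Q0 Q1 s t S hsb hfin B hB hnotexc
  refine ⟨1, le_rfl, ?_⟩
  have he : (fun i => 1 * B.1 i) = B.1 := funext fun i => one_mul _
  rw [he]
  exact ⟨B', hnotin, hsb'⟩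
end

section
/- Let Λ = KQ be the path algebra of a finite acyclic quiver Q over an algebraically closed field K, and let B be a brick that is not exceptional (i.e., Ext^1_Λ(B,B) ≠ 0). Then there exists a finite dimensional Λ-module X with Hom_Λ(X,B) = 0 whose dimension vector is a positive integer multiple of the dimension vector of B. -/
set_option linter.unusedSectionVars false
set_option maxHeartbeats 1000000

section Aux
open RepScheme Polynomial

variable {K : Type} [Field K] {Q0 Q1 : Type} [Fintype Q0] [Fintype Q1] {s t : Q1 → Q0}
variable {d : Q0 → ℕ}

lemma aux_brick_scalar (B : Rep K Q0 Q1 s t d) (hb : IsBrick K Q0 Q1 s t B)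
    (g : ∀ i : Q0, Matrix (Fin (d i)) (Fin (d i)) K)
    (hg : ∀ a : Q1, g (t a) * B a = B a * g (s a)) :
    ∃ c : K, g = fun i => c • (1 : Matrix (Fin (d i)) (Fin (d i)) K) := by
  classical
  -- some vertex has positive dimension
  have hd : ∃ i : Q0, d i ≠ 0 := by
    by_contra h
    push_neg at h
    have hsub : ∀ i : Q0, Subsingleton (Matrix (Fin (d i)) (Fin (d i)) K) := by
      intro i
      have : IsEmpty (Fin (d i)) := by rw [h i]; infer_instance
      constructor
      intro a b
      ext r c
      exact absurd r.2 (by simp [h i])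
    haveI : Subsingleton (∀ i : Q0, Matrix (Fin (d i)) (Fin (d i)) K) := by
      constructor
      intro a b
      funext i
      exact (hsub i).elim (a i) (b i)
    have := Module.finrank_zero_of_subsingleton
      (M := (RepHom K Q0 Q1 s t B B : Submodule K _)) (R := K)
    rw [IsBrick] at hb
    omega
  obtain ⟨i0, hi0⟩ := hd
  set one : ∀ i : Q0, Matrix (Fin (d i)) (Fin (d i)) K := fun i => 1 with hone
  have honemem : one ∈ RepHom K Q0 Q1 s t B B := by
    intro a
    simp [hone]
  have honene : one ≠ 0 := by
    intro h
    have h2 := congrFun h i0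
    have h3 := congrFun (congrFun h2 ⟨0, Nat.pos_of_ne_zero hi0⟩) ⟨0, Nat.pos_of_ne_zero hi0⟩
    simp [hone, Matrix.one_apply] at h3
  have hvne : (⟨one, honemem⟩ : RepHom K Q0 Q1 s t B B) ≠ 0 := by
    intro h
    exact honene (congrArg Subtype.val h)
  have h1 := (finrank_eq_one_iff_of_nonzero' (K := K)
      (V := RepHom K Q0 Q1 s t B B) ⟨one, honemem⟩ hvne).mp hb
  obtain ⟨c, hc⟩ := h1 ⟨g, hg⟩
  refine ⟨c, ?_⟩
  have := congrArg Subtype.val hc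
  simp only [SetLike.mk_smul_mk] at this
  rw [← this]
  funext i
  rfl

lemma aux_coeff_key (p : Polynomial K) (b c : K) (k : ℕ) :
    (p * (Polynomial.C b + Polynomial.X * Polynomial.C c)).coeff (k+1)
      = p.coeff (k+1) * b + p.coeff k * c := by
  have h : p * (Polynomial.C b + Polynomial.X * Polynomial.C c)
      = p * Polynomial.C b + Polynomial.X * (p * Polynomial.C c) := by ring
  rw [h, coeff_add, coeff_mul_C, coeff_X_mul, coeff_mul_C]

lemma aux_coeff_key0 (p : Polynomial K) (b c : K) :
    (p * (Polynomial.C b + Polynomial.X * Polynomial.C c)).coeff 0 = p.coeff 0 * b := by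
  have h : p * (Polynomial.C b + Polynomial.X * Polynomial.C c)
      = p * Polynomial.C b + Polynomial.X * (p * Polynomial.C c) := by ring
  rw [h, coeff_add, coeff_mul_C, mul_coeff_zero, coeff_X_zero, zero_mul, add_zero]

lemma aux_keyR (B : Rep K Q0 Q1 s t d) (hb : IsBrick K Q0 Q1 s t B)
    (C' : ∀ a : Q1, Matrix (Fin (d (t a))) (Fin (d (s a))) K)
    (hC : ∀ f, extMap K Q0 Q1 s t B B f ≠ C')
    (g : ∀ i : Q0, Matrix (Fin (d i)) (Fin (d i)) (Polynomial K))
    (hg : ∀ a : Q1, g (t a) * ((B a).map Polynomial.C + (Polynomial.X : Polynomial K) • (C' a).map Polynomial.C)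
          = (B a).map Polynomial.C * g (s a)) : g = 0 := by
  classical
  by_contra hne
  set cf : ℕ → ∀ i : Q0, Matrix (Fin (d i)) (Fin (d i)) K :=
    fun n i => (g i).map (fun q => q.coeff n) with hcf
  have entry : ∀ (a : Q1) (r : Fin (d (t a))) (c : Fin (d (s a))) (n : ℕ),
      (∑ j, (g (t a) r j) * (Polynomial.C (B a j c) + Polynomial.X * Polynomial.C (C' a j c))).coeff n
        = (∑ j, Polynomial.C (B a r j) * (g (s a) j c)).coeff n := by
    intro a r c n
    have h := congrFun (congrFun (hg a) r) c
    simp only [Matrix.mul_apply, Matrix.add_apply, Matrix.map_apply, Matrix.smul_apply,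
      smul_eq_mul] at h
    rw [h]
  have relsucc : ∀ (a : Q1) (k : ℕ),
      cf (k+1) (t a) * B a + cf k (t a) * C' a = B a * cf (k+1) (s a) := by
    intro a k
    ext r c
    have h := entry a r c (k+1)
    simp only [finset_sum_coeff, aux_coeff_key, coeff_C_mul] at h
    simp only [Matrix.add_apply, Matrix.mul_apply, hcf, Matrix.map_apply,
      ← Finset.sum_add_distrib]
    exact h
  have rel0 : ∀ a : Q1, cf 0 (t a) * B a = B a * cf 0 (s a) := by
    intro a
    ext r c
    have h := entry a r c 0
    simp only [finset_sum_coeff, aux_coeff_key0, coeff_C_mul] at h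
    simp only [Matrix.mul_apply, hcf, Matrix.map_apply]
    exact h
  have hex : ∃ n, cf n ≠ 0 := by
    by_contra h
    push_neg at h
    apply hne
    funext i
    ext r c n
    have h3 : cf n i r c = 0 := by rw [h n]; rfl
    simpa [hcf, Matrix.map_apply] using h3
  set m := Nat.find hex with hm
  have hcfm : cf m ≠ 0 := Nat.find_spec hex
  have hmin : ∀ k, k < m → cf k = 0 := by
    intro k hk
    have := Nat.find_min hex hk
    simpa [not_not] using this
  have hgm : ∀ a : Q1, cf m (t a) * B a = B a * cf m (s a) := by
    intro a
    rcases Nat.eq_zero_or_eq_succ_pred m with hm0 | hm0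
    · rw [hm0]; exact rel0 a
    · rw [hm0]
      have hz : cf (m - 1) = 0 := hmin _ (by omega)
      have h := relsucc a (m - 1)
      rw [hz] at h
      simpa [Matrix.zero_mul] using h
  obtain ⟨c, hcs⟩ := aux_brick_scalar B hb (cf m) hgm
  have hc0 : c ≠ 0 := by
    intro h
    apply hcfm
    rw [hcs, h]
    funext i
    simp
  set w := cf (m+1) with hw
  apply hC ((-(c⁻¹)) • w)
  funext a
  have hsucc := relsucc a m
  have hcm : cf m (t a) = c • 1 := by rw [hcs]
  rw [hcm, Matrix.smul_mul, Matrix.one_mul] at hsucc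
  have hrearr : w (t a) * B a - B a * w (s a) = -(c • C' a) := by
    rw [← hsucc]; abel
  show ((-(c⁻¹)) • w) (t a) * B a - B a * ((-(c⁻¹)) • w) (s a) = C' a
  simp only [Pi.smul_apply, Matrix.smul_mul, Matrix.mul_smul, ← smul_sub]
  rw [hrearr]
  rw [smul_neg, neg_smul, neg_neg, smul_smul, inv_mul_cancel₀ hc0, one_smul]

variable {K : Type} [Field K] {Q0 Q1 : Type} [Fintype Q0] [Fintype Q1] {s t : Q1 → Q0}
    {d : Q0 → ℕ}

/-- index type for coordinates of tuples of square matrices -/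
abbrev SV (Q0 : Type) (d : Q0 → ℕ) : Type := Σ i : Q0, Fin (d i) × Fin (d i)

/-- index type for coordinates of tuples of arrow matrices -/
abbrev SW (Q0 Q1 : Type) (s t : Q1 → Q0) (d : Q0 → ℕ) : Type :=
  Σ a : Q1, Fin (d (t a)) × Fin (d (s a))

/-- unflatten a coordinate vector into a tuple of square matrices -/
def unflat (A : Type) (v : SV Q0 d → A) : ∀ i : Q0, Matrix (Fin (d i)) (Fin (d i)) A :=
  fun i => Matrix.of fun r c => v ⟨i, (r, c)⟩

section BigMat

variable [DecidableEq Q0]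

/-- indicator tuple -/
def auxU (A : Type) [Semiring A] (e : SV Q0 d) : ∀ i : Q0, Matrix (Fin (d i)) (Fin (d i)) A :=
  unflat A (fun e' => if e' = e then 1 else 0)

/-- The matrix of `f ↦ (f (t a) * P a - N a * f (s a))_a` in coordinates, over any comm ring. -/
def auxBigMat (A : Type) [CommRing A]
    (P N : ∀ a : Q1, Matrix (Fin (d (t a))) (Fin (d (s a))) A) :
    Matrix (SW Q0 Q1 s t d) (SV Q0 d) A :=
  Matrix.of fun e' e =>
    (auxU A e (t e'.1) * P e'.1 - N e'.1 * auxU A e (s e'.1)) e'.2.1 e'.2.2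

lemma auxBigMat_map {A A' : Type} [CommRing A] [CommRing A'] (ψ : A →+* A')
    (P N : ∀ a : Q1, Matrix (Fin (d (t a))) (Fin (d (s a))) A) :
    (auxBigMat A P N).map ψ
      = auxBigMat A' (fun a => (P a).map ψ) (fun a => (N a).map ψ) := by
  ext e' e
  simp only [auxBigMat, auxU, unflat, Matrix.map_apply, Matrix.of_apply, Matrix.sub_apply,
    Matrix.mul_apply, map_sub, map_sum, map_mul, apply_ite ψ, map_one, map_zero]

/-- the flattened version of `extMap` -/
def auxLFlat (F' : Type) [Field F'] (P N : Rep F' Q0 Q1 s t d) :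
    (SV Q0 d → F') →ₗ[F'] (SW Q0 Q1 s t d → F') where
  toFun v := fun e' =>
    (extMap F' Q0 Q1 s t P N (unflat F' v)) e'.1 e'.2.1 e'.2.2
  map_add' u v := by
    have h : unflat (Q0 := Q0) (d := d) F' (u + v) = unflat F' u + unflat F' v := rfl
    funext e'
    simp only [h, map_add, Pi.add_apply, Matrix.add_apply]
  map_smul' c v := by
    have h : unflat (Q0 := Q0) (d := d) F' (c • v) = c • unflat F' v := rfl
    funext e'
    simp only [h, map_smul, Pi.smul_apply, Matrix.smul_apply, RingHom.id_apply, smul_eq_mul]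

lemma auxLFlat_toMatrix (F' : Type) [Field F'] (P N : Rep F' Q0 Q1 s t d) :
    LinearMap.toMatrix' (auxLFlat F' P N) = auxBigMat F' P N := by
  ext e' e
  rw [LinearMap.toMatrix'_apply]
  rw [show (Pi.single e 1 : SV Q0 d → F') = fun j' => if j' = e then 1 else 0 from
    funext fun j' => Pi.single_apply e 1 j']
  show (extMap F' Q0 Q1 s t P N (unflat F' fun j' => if j' = e then 1 else 0)) e'.1 e'.2.1 e'.2.2
      = _
  simp only [extMap, LinearMap.coe_mk, AddHom.coe_mk, auxBigMat, auxU, Matrix.of_apply]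

lemma auxBigMat_mulVec (F' : Type) [Field F'] (P N : Rep F' Q0 Q1 s t d)
    (f : ∀ i : Q0, Matrix (Fin (d i)) (Fin (d i)) F') :
    (auxBigMat F' P N).mulVec (fun e => f e.1 e.2.1 e.2.2)
      = fun e' => (extMap F' Q0 Q1 s t P N f) e'.1 e'.2.1 e'.2.2 := by
  have h0 : unflat F' (fun e : SV Q0 d => f e.1 e.2.1 e.2.2) = f := by
    funext i
    ext r c
    rfl
  rw [← auxLFlat_toMatrix]
  have h1 : (LinearMap.toMatrix' (auxLFlat F' P N)).mulVec (fun e => f e.1 e.2.1 e.2.2)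
      = Matrix.toLin' (LinearMap.toMatrix' (auxLFlat F' P N)) (fun e => f e.1 e.2.1 e.2.2) := by
    rw [Matrix.toLin'_apply]
  rw [h1, Matrix.toLin'_toMatrix']
  show (fun e' : SW Q0 Q1 s t d => (extMap F' Q0 Q1 s t P N (unflat F' fun e => f e.1 e.2.1 e.2.2)) e'.1 e'.2.1 e'.2.2) = _
  rw [h0]

end BigMat

lemma aux_exists_good [Infinite K] [DecidableEq Q0] (B : Rep K Q0 Q1 s t d)
    (hbrick : IsBrick K Q0 Q1 s t B)
    (hnotexc : ¬ Function.Surjective (extMap K Q0 Q1 s t B B)) :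
    ∃ Y : Rep K Q0 Q1 s t d, RepHom K Q0 Q1 s t Y B = ⊥ := by
  classical
  rw [Function.Surjective] at hnotexc
  push_neg at hnotexc
  obtain ⟨C', hC⟩ := hnotexc
  have hC' : ∀ f, extMap K Q0 Q1 s t B B f ≠ C' := fun f h => (hC f) h
  let F := FractionRing (Polynomial K)
  let φ' : Polynomial K →+* F := algebraMap (Polynomial K) F
  have hφ'inj : Function.Injective φ' := IsFractionRing.injective (Polynomial K) F
  let φ : K →+* F := φ'.comp (Polynomial.C)
  let XF : Rep F Q0 Q1 s t d := fun a => (B a).map φ + φ' Polynomial.X • (C' a).map φ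
  let BF : Rep F Q0 Q1 s t d := fun a => (B a).map φ
  -- Step 1: over F the generically deformed rep admits no nonzero hom to B
  have hker : ∀ f : ∀ i : Q0, Matrix (Fin (d i)) (Fin (d i)) F,
      (∀ a : Q1, f (t a) * XF a = BF a * f (s a)) → f = 0 := by
    intro f hf
    obtain ⟨b, hb⟩ := IsLocalization.exist_integer_multiples
      (nonZeroDivisors (Polynomial K)) (Finset.univ : Finset (SV Q0 d))
      (fun e => f e.1 e.2.1 e.2.2)
    choose w hw using fun e : SV Q0 d => RingHom.mem_range.mp (hb e (Finset.mem_univ e))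
    have hw' : ∀ e : SV Q0 d, φ' (w e) = φ' (b : Polynomial K) * f e.1 e.2.1 e.2.2 := by
      intro e
      rw [hw e]
      exact Algebra.smul_def _ _
    have hbne : φ' (b : Polynomial K) ≠ 0 := by
      intro h
      exact nonZeroDivisors.ne_zero b.2 (hφ'inj (by rw [h, map_zero]))
    set g : ∀ i : Q0, Matrix (Fin (d i)) (Fin (d i)) (Polynomial K) :=
      fun i => Matrix.of fun r c => w ⟨i, (r, c)⟩ with hgdef
    have hgeq : ∀ a : Q1,
        g (t a) * ((B a).map Polynomial.C + (Polynomial.X : Polynomial K) • (C' a).map Polynomial.C)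
          = (B a).map Polynomial.C * g (s a) := by
      intro a
      refine Matrix.ext fun r c => hφ'inj ?_
      have hL : φ' ((g (t a) * ((B a).map Polynomial.C
            + (Polynomial.X : Polynomial K) • (C' a).map Polynomial.C)) r c)
          = φ' (b : Polynomial K) * ((f (t a) * XF a) r c) := by
        simp only [XF, φ, RingHom.coe_comp, Function.comp_apply, Matrix.mul_apply, Matrix.add_apply, Matrix.map_apply, Matrix.smul_apply,
          smul_eq_mul, map_sum, map_mul, map_add, Finset.mul_sum, Matrix.of_apply, hgdef]
        apply Finset.sum_congr rfl
        intro j _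
        rw [hw' ⟨t a, (r, j)⟩]
        show φ' ↑b * f (t a) r j * (φ' (Polynomial.C (B a j c)) + φ' Polynomial.X * φ' (Polynomial.C (C' a j c))) = _
        ring
      have hR : φ' (((B a).map Polynomial.C * g (s a)) r c)
          = φ' (b : Polynomial K) * ((BF a * f (s a)) r c) := by
        simp only [BF, φ, RingHom.coe_comp, Function.comp_apply, Matrix.mul_apply, Matrix.map_apply, map_sum, map_mul, Finset.mul_sum,
          Matrix.of_apply, hgdef]
        apply Finset.sum_congr rfl
        intro j _
        rw [hw' ⟨s a, (j, c)⟩]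
        show φ' (Polynomial.C (B a r j)) * (φ' ↑b * f (s a) j c) = _
        ring
      rw [hL, hR, hf a]
    have hg0 : g = 0 := aux_keyR B hbrick C' hC' g hgeq
    funext i
    ext r c
    have hw0 : w ⟨i, (r, c)⟩ = 0 := by
      have h1 := congrFun hg0 i
      have h2 := congrFun (congrFun h1 r) c
      simpa [hgdef] using h2
    have h3 := hw' ⟨i, (r, c)⟩
    rw [hw0, map_zero] at h3
    have h4 := (mul_eq_zero.mp h3.symm).resolve_left hbne
    simpa using h4
  -- Step 2: injectivity of the flattened map over F
  have hLFinj : LinearMap.ker (auxLFlat F XF BF) = ⊥ := by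
    rw [LinearMap.ker_eq_bot']
    intro v hv
    have h2 : extMap F Q0 Q1 s t XF BF (unflat F v) = 0 := by
      funext a
      ext r c
      have := congrFun hv ⟨a, (r, c)⟩
      simpa [auxLFlat] using this
    have h3 : ∀ a : Q1, (unflat F v) (t a) * XF a = BF a * (unflat F v) (s a) := by
      intro a
      have h4 := congrFun h2 a
      simp only [extMap, LinearMap.coe_mk, AddHom.coe_mk, Pi.zero_apply] at h4
      rwa [sub_eq_zero] at h4
    have h5 := hker (unflat F v) h3
    funext e
    obtain ⟨i, r, c⟩ := e
    have h6 := congrFun (congrFun (congrFun h5 i) r) c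
    simpa [unflat] using h6
  obtain ⟨π, hπ⟩ := LinearMap.exists_leftInverse_of_injective (auxLFlat F XF BF) hLFinj
  set Pm : Matrix (SV Q0 d) (SW Q0 Q1 s t d) F := LinearMap.toMatrix' π with hPmdef
  have hPM : Pm * auxBigMat F XF BF = 1 := by
    rw [hPmdef, ← auxLFlat_toMatrix, ← LinearMap.toMatrix'_comp, hπ, LinearMap.toMatrix'_id]
  -- clear denominators of Pm
  obtain ⟨b2, hb2⟩ := IsLocalization.exist_integer_multiples
    (nonZeroDivisors (Polynomial K)) (Finset.univ : Finset (SV Q0 d × SW Q0 Q1 s t d))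
    (fun p => Pm p.1 p.2)
  choose P' hP' using fun p : SV Q0 d × SW Q0 Q1 s t d =>
    RingHom.mem_range.mp (hb2 p (Finset.mem_univ p))
  set P2 : Matrix (SV Q0 d) (SW Q0 Q1 s t d) (Polynomial K) :=
    Matrix.of fun e e' => P' (e, e') with hP2def
  have hP2 : ∀ e e', φ' (P2 e e') = φ' (b2 : Polynomial K) * Pm e e' := by
    intro e e'
    rw [show P2 e e' = P' (e, e') from rfl, hP' (e, e')]
    exact Algebra.smul_def _ _
  set PR : ∀ a : Q1, Matrix (Fin (d (t a))) (Fin (d (s a))) (Polynomial K) :=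
    fun a => (B a).map Polynomial.C + (Polynomial.X : Polynomial K) • (C' a).map Polynomial.C
    with hPRdef
  set NR : ∀ a : Q1, Matrix (Fin (d (t a))) (Fin (d (s a))) (Polynomial K) :=
    fun a => (B a).map Polynomial.C with hNRdef
  have hPRmap : ∀ a, (PR a).map φ' = XF a := by
    intro a
    refine Matrix.ext fun r c => ?_
    simp [hPRdef, Matrix.map_apply, Matrix.add_apply, Matrix.smul_apply, smul_eq_mul,
      map_add, map_mul, XF, φ, RingHom.comp_apply] <;> ring
  have hNRmap : ∀ a, (NR a).map φ' = BF a := by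
    intro a
    refine Matrix.ext fun r c => ?_
    simp [hNRdef, Matrix.map_apply, BF, φ, RingHom.comp_apply]
  have hBMm : (auxBigMat (Polynomial K) PR NR).map φ' = auxBigMat F XF BF := by
    rw [auxBigMat_map]
    have h1 : (fun a => (PR a).map ⇑φ') = XF := funext hPRmap
    have h2 : (fun a => (NR a).map ⇑φ') = BF := funext hNRmap
    rw [h1, h2]
  have hP2m : P2.map φ' = φ' (b2 : Polynomial K) • Pm := by
    ext e e'
    simp only [Matrix.map_apply, Matrix.smul_apply, smul_eq_mul, hP2]
  have hmulR : P2 * auxBigMat (Polynomial K) PR NR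
      = (b2 : Polynomial K) • (1 : Matrix (SV Q0 d) (SV Q0 d) (Polynomial K)) := by
    refine Matrix.ext fun e e'' => hφ'inj ?_
    have h7 : ((P2 * auxBigMat (Polynomial K) PR NR).map φ') e e''
        = (((b2 : Polynomial K) • (1 : Matrix (SV Q0 d) (SV Q0 d) (Polynomial K))).map φ') e e'' := by
      rw [Matrix.map_mul, hBMm, hP2m, Matrix.smul_mul, hPM]
      simp [Matrix.map_apply, Matrix.smul_apply, smul_eq_mul, Matrix.one_apply,
        apply_ite φ', map_one, map_zero, mul_ite, mul_one, mul_zero]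
    simpa [Matrix.map_apply] using h7
  -- specialize at a good point t₀
  have hb2ne : (b2 : Polynomial K) ≠ 0 := nonZeroDivisors.ne_zero b2.2
  obtain ⟨t₀, ht₀⟩ := Polynomial.exists_eval_ne_zero_of_natDegree_lt_card
    (b2 : Polynomial K) hb2ne
    (lt_of_lt_of_le (Cardinal.nat_lt_aleph0 _) (Cardinal.aleph0_le_mk K))
  set ev : Polynomial K →+* K := Polynomial.evalRingHom t₀ with hevdef
  set Y : Rep K Q0 Q1 s t d := fun a => B a + t₀ • C' a with hYdef
  have hPRev : ∀ a, (PR a).map ev = Y a := by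
    intro a
    refine Matrix.ext fun r c => ?_
    simp [hPRdef, hYdef, Matrix.map_apply, Matrix.add_apply, Matrix.smul_apply, smul_eq_mul,
      hevdef] <;> ring
  have hNRev : ∀ a, (NR a).map ev = B a := by
    intro a
    refine Matrix.ext fun r c => ?_
    simp [hNRdef, Matrix.map_apply, hevdef]
  have hKM : (auxBigMat (Polynomial K) PR NR).map ev = auxBigMat K Y B := by
    rw [auxBigMat_map]
    have h1 : (fun a => (PR a).map ⇑ev) = Y := funext hPRev
    have h2 : (fun a => (NR a).map ⇑ev) = B := funext hNRev
    rw [h1, h2]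
  refine ⟨Y, (Submodule.eq_bot_iff _).mpr ?_⟩
  intro f hf
  have hfa : ∀ a : Q1, f (t a) * Y a = B a * f (s a) := hf
  have hvec : (auxBigMat K Y B).mulVec (fun e => f e.1 e.2.1 e.2.2) = 0 := by
    rw [auxBigMat_mulVec]
    have hz : extMap K Q0 Q1 s t Y B f = 0 := by
      funext a
      simp only [extMap, LinearMap.coe_mk, AddHom.coe_mk, Pi.zero_apply]
      rw [sub_eq_zero]
      exact hfa a
    rw [hz]
    funext e'
    simp
  have hP2K : (P2.map ev) * (auxBigMat K Y B)
      = (Polynomial.eval t₀ (b2 : Polynomial K)) • (1 : Matrix (SV Q0 d) (SV Q0 d) K) := by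
    rw [← hKM, ← Matrix.map_mul, hmulR]
    ext e e''
    simp [Matrix.map_apply, Matrix.smul_apply, smul_eq_mul, hevdef, Matrix.one_apply,
      apply_ite (Polynomial.eval t₀), mul_ite, mul_one, mul_zero]
  have hveczero : ∀ e : SV Q0 d, f e.1 e.2.1 e.2.2 = 0 := by
    intro e
    have h5 : ((P2.map ev) * (auxBigMat K Y B)).mulVec (fun e => f e.1 e.2.1 e.2.2) = 0 := by
      rw [← Matrix.mulVec_mulVec, hvec, Matrix.mulVec_zero]
    rw [hP2K, Matrix.smul_mulVec, Matrix.one_mulVec] at h5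
    have h6 := congrFun h5 e
    simp only [Pi.smul_apply, smul_eq_mul, Pi.zero_apply] at h6
    exact (mul_eq_zero.mp h6).resolve_left ht₀
  funext i
  ext r c
  exact hveczero ⟨i, (r, c)⟩

end Aux

open RepScheme in
/-- **Proposition 3.15 (1).** Let `Λ = KQ` with `Q` a finite acyclic quiver. If `B` is a
non-exceptional brick, then there exists `X ∈ ⊥B` (i.e. `Hom_Λ(X,B) = 0`) whose dimension
vector is a positive integer multiple of `dim B`. -/
theorem RepScheme.exists_left_perp_module_multiple_dim
    (K : Type) [Field K] [IsAlgClosed K]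
    (Q0 Q1 : Type) [Fintype Q0] [Fintype Q1] (s t : Q1 → Q0)
    (hacyc : IsAcyclic Q0 Q1 s t)
    (d : Q0 → ℕ) (B : Rep K Q0 Q1 s t d)
    (hbrick : IsBrick K Q0 Q1 s t B)
    (hnotexc : ¬ Function.Surjective (extMap K Q0 Q1 s t B B)) :
    ∃ (l : ℕ), 1 ≤ l ∧ ∃ X : Rep K Q0 Q1 s t (fun i => l * d i),
      RepHom K Q0 Q1 s t X B = ⊥ := by
  classical
  obtain ⟨Y, hY⟩ := aux_exists_good B hbrick hnotexc
  refine ⟨1, le_refl 1, ?_⟩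
  set e : ∀ i : Q0, Fin (1 * d i) ≃ Fin (d i) := fun i => finCongr (one_mul (d i)) with hedef
  refine ⟨fun a => (Y a).submatrix (e (t a)) (e (s a)), ?_⟩
  rw [Submodule.eq_bot_iff]
  intro f hf
  have hfa : ∀ a : Q1, f (t a) * (Y a).submatrix (e (t a)) (e (s a)) = B a * f (s a) := hf
  set g : ∀ i : Q0, Matrix (Fin (d i)) (Fin (d i)) K :=
    fun i => (f i).submatrix id (e i).symm with hgdef
  have hfg : ∀ i, f i = (g i).submatrix id (e i) := by
    intro i
    rw [hgdef]
    refine Matrix.ext fun r c => ?_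
    simp [Matrix.submatrix_apply]
  have hgmem : g ∈ RepHom K Q0 Q1 s t Y B := by
    intro a
    have h1 := hfa a
    rw [hfg (t a), hfg (s a)] at h1
    have h2 : (g (t a)).submatrix id (e (t a)) * (Y a).submatrix (e (t a)) (e (s a))
        = (g (t a) * Y a).submatrix id (e (s a)) := by
      rw [Matrix.submatrix_mul_equiv]
    have h3 : B a * (g (s a)).submatrix id (e (s a))
        = (B a * g (s a)).submatrix id (e (s a)) := by
      have := Matrix.submatrix_mul_equiv (B a) (g (s a)) (id : Fin (d (t a)) → Fin (d (t a)))
        (Equiv.refl (Fin (d (s a)))) (e (s a))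
      simpa using this
    rw [h2, h3] at h1
    refine Matrix.ext fun r c => ?_
    have h4 := congrFun (congrFun h1 r) ((e (s a)).symm c)
    simpa [Matrix.submatrix_apply] using h4
  have hg0 : g = 0 := by
    rw [hY] at hgmem
    simpa using hgmem
  funext i
  refine Matrix.ext fun r c => ?_
  rw [hfg i]
  simp [Matrix.submatrix_apply, hg0]
end

section
/- Let Λ = KQ be the path algebra of a finite acyclic quiver Q over an algebraically closed field K, and let B be a brick that is not exceptional (i.e., Ext^1_Λ(B,B) ≠ 0). Then there exists a finite dimensional Λ-module X with Hom_Λ(B,X) = 0 whose dimension vector is a positive integer multiple of the dimension vector of B. -/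
/-! ### Auxiliary lemmas for the proof of Proposition 3.15 (2) -/

open Polynomial Matrix in
/-- **Pencil specialization.** If the linear pencil `A₀ - t A₁` between two finite
dimensional vector spaces has no nonzero "polynomial kernel sequence", then for some
scalar `c` the specialized map `A₀ - c • A₁` is injective. -/
theorem RepScheme.pencil_exists_injective_specialization
    {K : Type} [Field K] [Infinite K] {V W : Type}
    [AddCommGroup V] [Module K V] [AddCommGroup W] [Module K W]
    [FiniteDimensional K V] [FiniteDimensional K W]
    (A₀ A₁ : V →ₗ[K] W)
    (h : ∀ f : ℕ → V, A₀ (f 0) = 0 → (∀ k, A₀ (f (k + 1)) = A₁ (f k)) → ∀ k, f k = 0) :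
    ∃ c : K, ∀ v : V, A₀ v = c • A₁ v → v = 0 := by
  classical
  set n := Module.finrank K V with hn
  set m := Module.finrank K W with hm
  set bV : Module.Basis (Fin n) K V := Module.finBasis K V with hbV
  set bW : Module.Basis (Fin m) K W := Module.finBasis K W with hbW
  set A : Matrix (Fin m) (Fin n) K := LinearMap.toMatrix bV bW A₀ with hA
  set Bm : Matrix (Fin m) (Fin n) K := LinearMap.toMatrix bV bW A₁ with hBm
  set P : Matrix (Fin m) (Fin n) K[X] :=
    Matrix.of (fun i j => C (A i j) - X * C (Bm i j)) with hP
  -- Claim 1: the pencil has no kernel over `K[X]`.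
  have claim1 : ∀ v : Fin n → K[X], P *ᵥ v = 0 → v = 0 := by
    intro v hv
    set w : ℕ → Fin n → K := fun k j => (v j).coeff k with hw
    have coeff0 : ∀ i, ((P *ᵥ v) i).coeff 0 = (A *ᵥ w 0) i := by
      intro i
      simp only [Matrix.mulVec, dotProduct, hP, Matrix.of_apply, sub_mul,
        finset_sum_coeff, coeff_sub, mul_assoc]
      rw [Finset.sum_sub_distrib]
      have hz : ∀ j : Fin n, (X * (C (Bm i j) * v j)).coeff 0 = 0 := fun j => by
        rw [mul_coeff_zero, coeff_X_zero, zero_mul]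
      simp [hz, coeff_C_mul, hw]
    have coeffS : ∀ i k, ((P *ᵥ v) i).coeff (k + 1)
        = (A *ᵥ w (k + 1)) i - (Bm *ᵥ w k) i := by
      intro i k
      simp only [Matrix.mulVec, dotProduct, hP, Matrix.of_apply, sub_mul,
        finset_sum_coeff, coeff_sub, mul_assoc]
      rw [Finset.sum_sub_distrib]
      simp [coeff_X_mul, coeff_C_mul, hw]
    have h0 : A *ᵥ w 0 = 0 := by
      funext i
      have := congrArg (fun p => Polynomial.coeff p 0) (congrFun hv i)
      simpa [coeff0 i] using this
    have hsstep : ∀ k, A *ᵥ w (k + 1) = Bm *ᵥ w k := by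
      intro k; funext i
      have := congrArg (fun p => Polynomial.coeff p (k + 1)) (congrFun hv i)
      simp only [Pi.zero_apply, coeff_zero] at this
      rw [coeffS i k] at this
      exact sub_eq_zero.mp this
    set f : ℕ → V := fun k => bV.equivFun.symm (w k) with hf
    have hreprf : ∀ k, ⇑(bV.repr (f k)) = w k := by
      intro k
      have h1 : bV.equivFun (f k) = w k := bV.equivFun.apply_symm_apply (w k)
      funext j
      rw [← h1, Module.Basis.equivFun_apply]
    have hrw : ∀ (L : V →ₗ[K] W) (x : V),
        ⇑(bW.repr (L x)) = (LinearMap.toMatrix bV bW L) *ᵥ ⇑(bV.repr x) :=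
      fun L x => (LinearMap.toMatrix_mulVec_repr bV bW L x).symm
    have hf0 : A₀ (f 0) = 0 := by
      have h1 : ⇑(bW.repr (A₀ (f 0))) = 0 := by
        rw [hrw, hreprf, ← hA, h0]
      have h2 : bW.repr (A₀ (f 0)) = 0 := by
        ext i; simpa using congrFun h1 i
      exact (LinearEquiv.map_eq_zero_iff bW.repr).mp h2
    have hfs : ∀ k, A₀ (f (k + 1)) = A₁ (f k) := by
      intro k
      apply bW.repr.injective
      apply DFunLike.coe_injective
      change ⇑(bW.repr (A₀ (f (k + 1)))) = ⇑(bW.repr (A₁ (f k)))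
      rw [hrw, hrw, hreprf, hreprf, ← hA, ← hBm, hsstep k]
    have hfz := h f hf0 hfs
    funext j
    apply Polynomial.ext
    intro k
    have : w k = 0 := by
      rw [← hreprf k, hfz k]
      simp
    simpa [hw] using congrFun this j
  -- Claim 2: the pencil is injective over the fraction field `K(t)`.
  set F := FractionRing K[X] with hF
  have hφ : Function.Injective (algebraMap K[X] F) := IsFractionRing.injective K[X] F
  set P' : Matrix (Fin m) (Fin n) F := P.map (algebraMap K[X] F) with hP'
  have claim2 : ∀ v : Fin n → F, P' *ᵥ v = 0 → v = 0 := by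
    intro v hv
    obtain ⟨q, hq⟩ := IsLocalization.exist_integer_multiples_of_finite
      (nonZeroDivisors K[X]) v
    choose w hwspec using hq
    have hPw : P *ᵥ w = 0 := by
      funext i
      apply hφ
      have hstep : (algebraMap K[X] F) ((P *ᵥ w) i)
          = (algebraMap K[X] F) (q : K[X]) * ((P' *ᵥ v) i) := by
        simp only [Matrix.mulVec, dotProduct, map_sum, _root_.map_mul,
          Finset.mul_sum, hP', Matrix.map_apply]
        refine Finset.sum_congr rfl fun j _ => ?_
        rw [hwspec j, Algebra.smul_def]
        ring
      rw [hv] at hstep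
      simpa using hstep
    have hw0 : w = 0 := claim1 w hPw
    funext i
    have h1 : (algebraMap K[X] F) (q : K[X]) * v i = 0 := by
      rw [← Algebra.smul_def, ← hwspec i, hw0]
      simp
    rcases mul_eq_zero.mp h1 with h' | h'
    · exact absurd h'
        (IsFractionRing.to_map_ne_zero_of_mem_nonZeroDivisors q.2)
    · exact h'
  have hker' : LinearMap.ker (Matrix.mulVecLin P') = ⊥ :=
    Matrix.ker_mulVecLin_eq_bot_iff.mpr claim2
  obtain ⟨g, hg⟩ := LinearMap.exists_leftInverse_of_injective _ hker'
  set G : Matrix (Fin n) (Fin m) F := LinearMap.toMatrix' g with hG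
  have hGP : G * P' = 1 := by
    have h1 : LinearMap.toMatrix' (g.comp (Matrix.mulVecLin P'))
        = LinearMap.toMatrix' (LinearMap.id (R := F) (M := Fin n → F)) := by rw [hg]
    rw [LinearMap.toMatrix'_comp, LinearMap.toMatrix'_id, ← Matrix.toLin'_apply',
      LinearMap.toMatrix'_toLin'] at h1
    exact h1
  obtain ⟨q2, hq2⟩ := IsLocalization.exist_integer_multiples_of_finite
    (nonZeroDivisors K[X]) (fun p : Fin n × Fin m => G p.1 p.2)
  choose Hm hHm using hq2
  set H : Matrix (Fin n) (Fin m) K[X] := Matrix.of (fun i j => Hm (i, j)) with hH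
  have hHG : ∀ i j, (algebraMap K[X] F) (H i j) = (q2 : K[X]) • G i j :=
    fun i j => hHm (i, j)
  have hHP : H * P = (q2 : K[X]) • (1 : Matrix (Fin n) (Fin n) K[X]) := by
    refine Matrix.ext fun i j => ?_
    apply hφ
    have lhs : (algebraMap K[X] F) ((H * P) i j)
        = (algebraMap K[X] F) (q2 : K[X]) * (G * P') i j := by
      simp only [Matrix.mul_apply, map_sum, _root_.map_mul, Finset.mul_sum, hP',
        Matrix.map_apply]
      refine Finset.sum_congr rfl fun k _ => ?_
      rw [hHG, Algebra.smul_def]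
      ring
    rw [hGP] at lhs
    rw [lhs]
    by_cases hij : i = j <;>
      simp [Matrix.one_apply, hij, Matrix.smul_apply, smul_eq_mul, _root_.map_mul,
        _root_.map_one, _root_.map_zero]
  have hq2ne : (q2 : K[X]) ≠ 0 := mem_nonZeroDivisors_iff_ne_zero.mp q2.2
  have hcex : ∃ c : K, Polynomial.eval c (q2 : K[X]) ≠ 0 := by
    by_contra hcc
    push_neg at hcc
    exact hq2ne (Polynomial.zero_of_eval_zero _ hcc)
  obtain ⟨c, hcq⟩ := hcex
  refine ⟨c, fun v hv => ?_⟩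
  set ψ : K[X] →+* K := Polynomial.evalRingHom c with hψ
  set x : Fin n → K := ⇑(bV.repr v) with hx
  have hAx : (A - c • Bm) *ᵥ x = 0 := by
    have h1 : ⇑(bW.repr (A₀ v)) = A *ᵥ x :=
      (LinearMap.toMatrix_mulVec_repr bV bW A₀ v).symm
    have h2 : ⇑(bW.repr (A₁ v)) = Bm *ᵥ x :=
      (LinearMap.toMatrix_mulVec_repr bV bW A₁ v).symm
    have h3 : A *ᵥ x = c • (Bm *ᵥ x) := by
      rw [← h1, ← h2, hv]
      funext i
      simp
    rw [Matrix.sub_mulVec, Matrix.smul_mulVec, h3, sub_self]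
  have hψP : P.map ψ = A - c • Bm := by
    refine Matrix.ext fun i j => ?_
    rw [Matrix.map_apply, hP, Matrix.of_apply, hψ, Matrix.sub_apply, Matrix.smul_apply,
      smul_eq_mul, Polynomial.coe_evalRingHom, Polynomial.eval_sub, Polynomial.eval_mul,
      Polynomial.eval_X, Polynomial.eval_C, Polynomial.eval_C]
  have hψHP : (H.map ψ) * (P.map ψ) = (Polynomial.eval c (q2 : K[X])) • 1 := by
    have h1 := congrArg (fun M => Matrix.map M ψ) hHP
    simp only [Matrix.map_mul] at h1
    rw [h1]
    refine Matrix.ext fun i j => ?_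
    rw [Matrix.map_apply, Matrix.smul_apply, Matrix.smul_apply, smul_eq_mul, smul_eq_mul]
    rcases eq_or_ne i j with hij | hij
    · subst hij
      rw [Matrix.one_apply_eq, Matrix.one_apply_eq, mul_one, mul_one]
      rfl
    · rw [Matrix.one_apply_ne hij, Matrix.one_apply_ne hij, mul_zero, mul_zero,
        RingHom.map_zero]
  have hfinal : (Polynomial.eval c (q2 : K[X])) • x = 0 := by
    have h1 : ((Polynomial.eval c (q2 : K[X])) • (1 : Matrix (Fin n) (Fin n) K)) *ᵥ x = 0 := by
      rw [← hψHP, ← Matrix.mulVec_mulVec, hψP, hAx, Matrix.mulVec_zero]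
    rw [Matrix.smul_mulVec, Matrix.one_mulVec] at h1
    exact h1
  have hx0 : x = 0 := by
    rcases smul_eq_zero.mp hfinal with h' | h'
    · exact absurd h' hcq
    · exact h'
  have hrepr0 : bV.repr v = 0 := by
    ext i; simpa [hx] using congrFun hx0 i
  exact (LinearEquiv.map_eq_zero_iff bV.repr).mp hrepr0

/-- **Proposition 3.15 (2).** Let `Λ = KQ` with `Q` a finite acyclic quiver. If `B` is a
non-exceptional brick, then there exists `X ∈ B⊥` (i.e. `Hom_Λ(B,X) = 0`) whose dimension
vector is a positive integer multiple of `dim B`. -/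
theorem RepScheme.exists_right_perp_module_multiple_dim
    (K : Type) [Field K] [IsAlgClosed K]
    (Q0 Q1 : Type) [Fintype Q0] [Fintype Q1] (s t : Q1 → Q0)
    (hacyc : IsAcyclic Q0 Q1 s t)
    (d : Q0 → ℕ) (B : Rep K Q0 Q1 s t d)
    (hbrick : IsBrick K Q0 Q1 s t B)
    (hnotexc : ¬ Function.Surjective (extMap K Q0 Q1 s t B B)) :
    ∃ (l : ℕ), 1 ≤ l ∧ ∃ X : Rep K Q0 Q1 s t (fun i => l * d i),
      RepHom K Q0 Q1 s t B X = ⊥ := by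
  classical
  rw [Function.Surjective] at hnotexc
  push_neg at hnotexc
  obtain ⟨E, hE⟩ := hnotexc
  set M0 := extMap K Q0 Q1 s t B B with hM0
  set N : (∀ i : Q0, Matrix (Fin (d i)) (Fin (d i)) K) →ₗ[K]
      (∀ a : Q1, Matrix (Fin (d (t a))) (Fin (d (s a))) K) :=
    { toFun := fun f a => E a * f (s a)
      map_add' := fun f g => by funext a; simp [Matrix.mul_add]
      map_smul' := fun r f => by funext a; simp [Matrix.mul_smul] } with hN
  set idm : ∀ i : Q0, Matrix (Fin (d i)) (Fin (d i)) K := fun i => (1 : Matrix _ _ K)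
    with hidm
  have hmemBB : ∀ x : ∀ i : Q0, Matrix (Fin (d i)) (Fin (d i)) K,
      x ∈ RepHom K Q0 Q1 s t B B ↔ ∀ a, x (t a) * B a = B a * x (s a) := fun x => Iff.rfl
  have hid_mem : idm ∈ RepHom K Q0 Q1 s t B B := by
    rw [hmemBB]
    intro a
    simp [hidm]
  have hbrick' : Module.finrank K (RepHom K Q0 Q1 s t B B) = 1 := hbrick
  have hdim : ∃ i, d i ≠ 0 := by
    by_contra hc
    push_neg at hc
    have h1 : Module.finrank K (∀ i : Q0, Matrix (Fin (d i)) (Fin (d i)) K) = 0 := by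
      rw [Module.finrank_pi_fintype]
      refine Finset.sum_eq_zero fun i _ => ?_
      rw [Module.finrank_matrix]
      simp [hc i]
    have h2 := Submodule.finrank_le (RepHom K Q0 Q1 s t B B)
    rw [hbrick', h1] at h2
    omega
  obtain ⟨i0, hi0⟩ := hdim
  have hidm_ne : idm ≠ 0 := by
    intro hz
    have h1 : (idm i0) ⟨0, Nat.pos_of_ne_zero hi0⟩ ⟨0, Nat.pos_of_ne_zero hi0⟩ = 0 := by
      rw [hz]
      simp
    rw [hidm] at h1
    simp [Matrix.one_apply] at h1
  have hspan : RepHom K Q0 Q1 s t B B = Submodule.span K {idm} := by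
    symm
    apply Submodule.eq_of_le_of_finrank_le
    · rw [Submodule.span_le, Set.singleton_subset_iff]
      exact hid_mem
    · rw [hbrick', finrank_span_singleton hidm_ne]
  have hker : ∀ x, M0 x = 0 → ∃ μ : K, x = μ • idm := by
    intro x hx
    have hxm : x ∈ RepHom K Q0 Q1 s t B B := by
      rw [hmemBB]
      intro a
      have h2 : x (t a) * B a - B a * x (s a) = 0 := congrFun hx a
      exact sub_eq_zero.mp h2
    rw [hspan, Submodule.mem_span_singleton] at hxm
    obtain ⟨μ, hμ⟩ := hxm
    exact ⟨μ, hμ.symm⟩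
  have hE0 : E ≠ 0 := by
    intro hz
    exact hE 0 (by rw [map_zero, hz])
  have hNid : N idm = E := by
    funext a
    show E a * idm (s a) = E a
    rw [hidm]
    exact Matrix.mul_one _
  have hind : ∀ f : ℕ → (∀ i : Q0, Matrix (Fin (d i)) (Fin (d i)) K),
      M0 (f 0) = 0 → (∀ k, M0 (f (k + 1)) = N (f k)) → ∀ k, f k = 0 := by
    intro f h0 hsx
    have key : ∀ k, M0 (f k) = 0 → f k = 0 := by
      intro k hk
      obtain ⟨μ, hμ⟩ := hker _ hk
      rcases eq_or_ne μ 0 with hμ0 | hμ0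
      · rw [hμ, hμ0, zero_smul]
      · exfalso
        have hstep : M0 (f (k + 1)) = μ • E := by
          rw [hsx k, hμ, map_smul, hNid]
        exact hE (μ⁻¹ • f (k + 1)) (by
          rw [map_smul, hstep, smul_smul, inv_mul_cancel₀ hμ0, one_smul])
    intro k
    induction k with
    | zero => exact key 0 h0
    | succ k ih => exact key (k + 1) (by rw [hsx k, ih, map_zero])
  obtain ⟨c, hc⟩ := RepScheme.pencil_exists_injective_specialization M0 N hind
  set X : Rep K Q0 Q1 s t d := fun a => B a + c • E a with hX
  have hXbot : RepHom K Q0 Q1 s t B X = ⊥ := by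
    rw [Submodule.eq_bot_iff]
    intro x hx
    apply hc
    have hx' : ∀ a, x (t a) * B a = X a * x (s a) := hx
    funext a
    show x (t a) * B a - B a * x (s a) = c • (E a * x (s a))
    rw [hx' a]
    show (B a + c • E a) * x (s a) - B a * x (s a) = c • (E a * x (s a))
    rw [Matrix.add_mul, add_sub_cancel_left, Matrix.smul_mul]
  have key : ∀ c' : Q0 → ℕ, c' = d →
      ∃ X' : Rep K Q0 Q1 s t c', RepHom K Q0 Q1 s t B X' = ⊥ := by
    intro c' hc'
    subst hc'
    exact ⟨X, hXbot⟩
  exact ⟨1, le_refl 1, key _ (funext fun i => one_mul (d i))⟩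
end

section
/- Let Λ = KQ be the path algebra of a finite acyclic quiver Q over an algebraically closed field K, let B be a brick that is not exceptional (i.e., Ext^1_Λ(B,B) ≠ 0), and set θ := ι^{-1}(dim B) ∈ K_0(proj Λ). Then B ∈ F̄_θ, that is, every submodule L of B satisfies θ(L) ≤ 0. -/
/-!
Common setup: representation schemes of a finite dimensional algebra `Λ = KQ/I`
(`Q` a finite quiver, `I` an admissible ideal), following the paper.
-/

namespace RepScheme

variable (K : Type) [Field K]
variable (Q0 Q1 : Type) [Fintype Q0] [Fintype Q1]
variable (s t : Q1 → Q0)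

/-- A subrepresentation (submodule) of a representation point: a family of subspaces
stable under all the arrow matrices. -/
def IsSubrep {d : Q0 → ℕ} (M : Rep K Q0 Q1 s t d)
    (W : ∀ i : Q0, Submodule K (Fin (d i) → K)) : Prop :=
  ∀ a : Q1, ∀ v ∈ W (s a), (M a).mulVec v ∈ W (t a)

/-- The Euler pairing: for the path algebra `KQ` of a finite acyclic quiver, the
`ℤ`-linear form `θ = ι⁻¹(d) ∈ K₀(proj Λ)` (where `ι : K₀(proj Λ) → K₀(mod Λ)` sends `[P]`
to `dim P`, and `⟨[P_i], dim S_j⟩ = δ_{ij}`) satisfies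
`θ(e) = ∑ᵢ dₖ eₖ - ∑ₐ d_{s a} e_{t a}`. -/
def euler (d e : Q0 → ℤ) : ℤ :=
  (∑ i : Q0, d i * e i) - ∑ a : Q1, d (s a) * e (t a)

end RepScheme

namespace RepScheme

section Aux

variable {K : Type} [Field K]
variable {Q0 Q1 : Type} [Fintype Q0] [Fintype Q1]
variable {s t : Q1 → Q0}

/-- The Hom-defining map for a subrepresentation: its kernel is `Hom(B, L)`. -/
def subHomMap {d : Q0 → ℕ} (B : Rep K Q0 Q1 s t d)
    (W : ∀ i : Q0, Submodule K (Fin (d i) → K)) (hW : IsSubrep K Q0 Q1 s t B W) :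
    (∀ i : Q0, (Fin (d i) → K) →ₗ[K] W i) →ₗ[K]
      (∀ a : Q1, (Fin (d (s a)) → K) →ₗ[K] W (t a)) where
  toFun f := fun a =>
    f (t a) ∘ₗ Matrix.mulVecLin (B a)
      - (LinearMap.restrict (Matrix.mulVecLin (B a)) (fun x hx => hW a x hx)) ∘ₗ f (s a)
  map_add' f g := by
    funext a
    ext v
    simp only [Pi.add_apply, LinearMap.add_comp, LinearMap.comp_add, LinearMap.sub_apply,
      LinearMap.add_apply, LinearMap.coe_comp, Function.comp_apply]
    abel
  map_smul' k f := by
    funext a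
    ext v
    simp only [Pi.smul_apply, LinearMap.smul_comp, LinearMap.comp_smul, RingHom.id_apply,
      LinearMap.sub_apply, LinearMap.smul_apply, LinearMap.coe_comp, Function.comp_apply,
      smul_sub]

/-- Every element of `End(B)` for a brick `B` (with some `d i > 0`) is a scalar multiple
of the identity. -/
theorem eq_smul_one_of_mem_repHom {d : Q0 → ℕ} {B : Rep K Q0 Q1 s t d}
    (hbrick : IsBrick K Q0 Q1 s t B) {i0 : Q0} (hd0 : 0 < d i0)
    {g : ∀ i : Q0, Matrix (Fin (d i)) (Fin (d i)) K}
    (hg : g ∈ RepHom K Q0 Q1 s t B B) :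
    ∃ c : K, g = c • (fun _ => 1 : ∀ i : Q0, Matrix (Fin (d i)) (Fin (d i)) K) := by
  set one : ∀ i : Q0, Matrix (Fin (d i)) (Fin (d i)) K := fun _ => 1 with hone
  have h1mem : one ∈ RepHom K Q0 Q1 s t B B := by
    intro a
    simp [hone]
  have h1ne : one ≠ 0 := by
    intro h
    have := congrFun h i0
    have h2 := congrFun (congrFun this ⟨0, hd0⟩) ⟨0, hd0⟩
    simp [hone, Matrix.one_apply] at h2
  have hle : (Submodule.span K {one}) ≤ RepHom K Q0 Q1 s t B B := by
    rw [Submodule.span_le, Set.singleton_subset_iff]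
    exact h1mem
  have heq : Submodule.span K {one} = RepHom K Q0 Q1 s t B B := by
    apply Submodule.eq_of_le_of_finrank_le hle
    rw [hbrick, finrank_span_singleton h1ne]
  rw [← heq] at hg
  obtain ⟨c, hc⟩ := Submodule.mem_span_singleton.mp hg
  exact ⟨c, hc.symm⟩

/-- If the subrepresentation is proper somewhere, the Hom-defining map is injective. -/
theorem subHomMap_injective {d : Q0 → ℕ} {B : Rep K Q0 Q1 s t d}
    (hbrick : IsBrick K Q0 Q1 s t B)
    {W : ∀ i : Q0, Submodule K (Fin (d i) → K)} (hW : IsSubrep K Q0 Q1 s t B W)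
    {i0 : Q0} (hi0 : W i0 ≠ ⊤) :
    Function.Injective (subHomMap B W hW) := by
  have hd0 : 0 < d i0 := by
    rcases Nat.eq_zero_or_pos (d i0) with h | h
    · exfalso
      apply hi0
      rw [eq_top_iff]
      intro x _
      have : Subsingleton (Fin (d i0) → K) := by
        rw [h]
        infer_instance
      rw [Subsingleton.elim x 0]
      exact (W i0).zero_mem
    · exact h
  rw [injective_iff_map_eq_zero]
  intro f hf
  -- turn f into an endomorphism of B
  set gL : ∀ i : Q0, (Fin (d i) → K) →ₗ[K] (Fin (d i) → K) :=
    fun i => (W i).subtype ∘ₗ f i with hgL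
  have hcomm : ∀ a : Q1,
      gL (t a) ∘ₗ Matrix.mulVecLin (B a) = Matrix.mulVecLin (B a) ∘ₗ gL (s a) := by
    intro a
    have h00 : (subHomMap B W hW) f a = 0 := by rw [hf]; rfl
    have h0 : f (t a) ∘ₗ Matrix.mulVecLin (B a)
        = (LinearMap.restrict (Matrix.mulVecLin (B a)) (fun x hx => hW a x hx)) ∘ₗ f (s a) :=
      sub_eq_zero.mp h00
    calc gL (t a) ∘ₗ Matrix.mulVecLin (B a)
        = (W (t a)).subtype ∘ₗ (f (t a) ∘ₗ Matrix.mulVecLin (B a)) := by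
          rw [hgL]; rfl
      _ = (W (t a)).subtype ∘ₗ
            ((LinearMap.restrict (Matrix.mulVecLin (B a)) (fun x hx => hW a x hx)) ∘ₗ f (s a)) := by
          rw [h0]
      _ = Matrix.mulVecLin (B a) ∘ₗ gL (s a) := by
          ext v
          simp [hgL, LinearMap.restrict_apply]
          rfl
  set g : ∀ i : Q0, Matrix (Fin (d i)) (Fin (d i)) K :=
    fun i => LinearMap.toMatrix' (gL i) with hg
  have hgmem : g ∈ RepHom K Q0 Q1 s t B B := by
    intro a
    have : LinearMap.toMatrix' (gL (t a) ∘ₗ Matrix.mulVecLin (B a))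
        = LinearMap.toMatrix' (Matrix.mulVecLin (B a) ∘ₗ gL (s a)) := by rw [hcomm a]
    rwa [LinearMap.toMatrix'_comp, LinearMap.toMatrix'_comp,
      ← Matrix.toLin'_apply' (B a), LinearMap.toMatrix'_toLin'] at this
  obtain ⟨c, hc⟩ := eq_smul_one_of_mem_repHom hbrick hd0 hgmem
  have hgLc : ∀ i : Q0, gL i = c • LinearMap.id := by
    intro i
    have h1 : LinearMap.toMatrix' (gL i) = c • (1 : Matrix (Fin (d i)) (Fin (d i)) K) :=
      congrFun hc i
    have h2 := congrArg Matrix.toLin' h1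
    rwa [Matrix.toLin'_toMatrix', map_smul, Matrix.toLin'_one] at h2
  rcases eq_or_ne c 0 with hc0 | hc0
  · -- gL i = 0, hence f = 0
    funext i
    apply LinearMap.ext
    intro v
    have h2 : gL i v = 0 := by rw [hgLc i, hc0]; simp
    exact Subtype.ext (by simpa [hgL] using h2)
  · -- c ≠ 0 forces W i0 = ⊤, contradiction
    exfalso
    apply hi0
    rw [eq_top_iff]
    intro x _
    have : gL i0 (c⁻¹ • x) = x := by
      rw [hgLc i0]
      simp [smul_smul, inv_mul_cancel₀ hc0]
    rw [← this, hgL]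
    simp only [LinearMap.coe_comp, Function.comp_apply, Submodule.coe_subtype]
    exact (f i0 (c⁻¹ • x)).2

end Aux

end RepScheme

/-- **Lemma 3.13.** Let `Λ = KQ` with `Q` a finite acyclic quiver and let `B` be a
non-exceptional brick. Set `θ := ι⁻¹(dim B) ∈ K₀(proj Λ)`. Then `B ∈ F̄_θ`, i.e.
every submodule `L ⊆ B` satisfies `θ(L) ≤ 0`. -/
theorem RepScheme.nonexceptional_brick_mem_Fbar
    (K : Type) [Field K] [IsAlgClosed K]
    (Q0 Q1 : Type) [Fintype Q0] [Fintype Q1] (s t : Q1 → Q0)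
    (hacyc : IsAcyclic Q0 Q1 s t)
    (d : Q0 → ℕ) (B : Rep K Q0 Q1 s t d)
    (hbrick : IsBrick K Q0 Q1 s t B)
    (hnotexc : ¬ Function.Surjective (extMap K Q0 Q1 s t B B)) :
    ∀ W : ∀ i : Q0, Submodule K (Fin (d i) → K), IsSubrep K Q0 Q1 s t B W →
      euler Q0 Q1 s t (fun i => (d i : ℤ)) (fun i => (Module.finrank K (W i) : ℤ)) ≤ 0 := by
  intro W hWsub
  rw [euler, sub_nonpos]
  by_cases htop : ∀ i, W i = ⊤
  · -- the case `L = B`: use the non-vanishing self-extensions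
    have he : ∀ i : Q0, Module.finrank K (W i) = d i := by
      intro i
      rw [htop i, finrank_top, Module.finrank_pi]
      simp
    set E := extMap K Q0 Q1 s t B B with hE
    have hker : LinearMap.ker E = RepHom K Q0 Q1 s t B B := by
      ext f
      simp only [LinearMap.mem_ker, hE, extMap, LinearMap.coe_mk, AddHom.coe_mk,
        funext_iff, Pi.zero_apply, sub_eq_zero]
      rfl
    have hrk := LinearMap.finrank_range_add_finrank_ker E
    have hkerdim : Module.finrank K (LinearMap.ker E) = 1 := by rw [hker]; exact hbrick
    have hlt : Module.finrank K (LinearMap.range E)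
        < Module.finrank K (∀ a : Q1, Matrix (Fin (d (t a))) (Fin (d (s a))) K) := by
      apply Submodule.finrank_lt
      intro h
      exact hnotexc (LinearMap.range_eq_top.mp h)
    have hdom : Module.finrank K (∀ i : Q0, Matrix (Fin (d i)) (Fin (d i)) K)
        = ∑ i : Q0, d i * d i := by
      rw [Module.finrank_pi_fintype]
      refine Finset.sum_congr rfl fun i _ => ?_
      rw [Module.finrank_matrix]
      simp
    have hcod : Module.finrank K (∀ a : Q1, Matrix (Fin (d (t a))) (Fin (d (s a))) K)
        = ∑ a : Q1, d (s a) * d (t a) := by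
      rw [Module.finrank_pi_fintype]
      refine Finset.sum_congr rfl fun a _ => ?_
      rw [Module.finrank_matrix]
      simp [mul_comm]
    have key : (∑ i : Q0, d i * d i) ≤ ∑ a : Q1, d (s a) * d (t a) := by omega
    simp only [he]
    exact_mod_cast key
  · -- the case of a proper submodule: `Hom(B, L) = 0`
    push_neg at htop
    obtain ⟨i0, hi0⟩ := htop
    have hinj := subHomMap_injective hbrick hWsub hi0
    have hle : Module.finrank K (∀ i : Q0, (Fin (d i) → K) →ₗ[K] W i)
        ≤ Module.finrank K (∀ a : Q1, (Fin (d (s a)) → K) →ₗ[K] W (t a)) :=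
      LinearMap.finrank_le_finrank_of_injective hinj
    have hdom : Module.finrank K (∀ i : Q0, (Fin (d i) → K) →ₗ[K] W i)
        = ∑ i : Q0, d i * Module.finrank K (W i) := by
      rw [Module.finrank_pi_fintype]
      refine Finset.sum_congr rfl fun i _ => ?_
      rw [Module.finrank_linearMap, Module.finrank_pi]
      simp
    have hcod : Module.finrank K (∀ a : Q1, (Fin (d (s a)) → K) →ₗ[K] W (t a))
        = ∑ a : Q1, d (s a) * Module.finrank K (W (t a)) := by
      rw [Module.finrank_pi_fintype]
      refine Finset.sum_congr rfl fun a _ => ?_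
      rw [Module.finrank_linearMap, Module.finrank_pi]
      simp
    rw [hdom, hcod] at hle
    exact_mod_cast hle
end
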